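/- arXiv:0806.1705 — 4 statements merged into one kernel-verified Lean document; each statement's English description precedes it below -/
import Mathlib

section
/- Let T : V → V be a linear map on an n-dimensional complex vector space given in an ordered basis {v_1,…,v_n} by a single Jordan block with eigenvalue λ where |λ| = 1. Then for every nonzero v ∈ V there exists a unique k(v) ∈ ℕ ∪ {0} such that every cluster point of the sequence C(m, k(v))^(−1) · T^m(v) lies in span{v_1} \ {0}. Explicitly, if v = Σ α_j v_j, then k(v) = max{ j : α_j ≠ 0 } − 1. -/
open Filter Topology


lemma choose_ratio_nat_le {d k : ℕ} (hdk : d < k) {m : ℕ} (hm : 2 * k ≤ m) :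
    m.choose d * m ≤ (k.factorial * 2 ^ k) * m.choose k := by
  have h1 : m.choose d ≤ m ^ d := by
    calc m.choose d ≤ d.factorial * m.choose d := Nat.le_mul_of_pos_left _ d.factorial_pos
    _ = m.descFactorial d := (Nat.descFactorial_eq_factorial_mul_choose m d).symm
    _ ≤ m ^ d := Nat.descFactorial_le_pow m d
  have h2 : m ^ k ≤ 2 ^ k * (k.factorial * m.choose k) := by
    calc m ^ k ≤ (2 * (m + 1 - k)) ^ k := Nat.pow_le_pow_left (by omega) k
    _ = 2 ^ k * (m + 1 - k) ^ k := by rw [mul_pow]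
    _ ≤ 2 ^ k * m.descFactorial k :=
        Nat.mul_le_mul_left _ (Nat.pow_sub_le_descFactorial m k)
    _ = 2 ^ k * (k.factorial * m.choose k) := by
        rw [Nat.descFactorial_eq_factorial_mul_choose]
  calc m.choose d * m ≤ m ^ d * m := Nat.mul_le_mul_right m h1
  _ = m ^ (d + 1) := by rw [pow_succ]
  _ ≤ m ^ k := Nat.pow_le_pow_right (by omega) (by omega)
  _ ≤ 2 ^ k * (k.factorial * m.choose k) := h2
  _ = (k.factorial * 2 ^ k) * m.choose k := by ring

lemma ratio_tendsto_zero {d k : ℕ} (hdk : d < k) :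
    Tendsto (fun m : ℕ => (m.choose d : ℝ) / (m.choose k : ℝ)) atTop (𝓝 0) := by
  apply squeeze_zero' (g := fun m : ℕ => ((k.factorial * 2 ^ k : ℕ) : ℝ) / m)
  · filter_upwards with m; positivity
  · filter_upwards [eventually_ge_atTop (2 * k), eventually_gt_atTop 0] with m hm hm0
    have hck : 0 < m.choose k := Nat.choose_pos (by omega)
    rw [div_le_div_iff₀ (by exact_mod_cast hck) (by exact_mod_cast hm0)]
    exact_mod_cast choose_ratio_nat_le hdk hm
  · exact tendsto_const_div_atTop_nhds_zero_nat _

lemma ratio_tendsto_atTop {d k : ℕ} (hkd : k < d) :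
    Tendsto (fun m : ℕ => (m.choose d : ℝ) / (m.choose k : ℝ)) atTop atTop := by
  have h0 : Tendsto (fun m : ℕ => (m.choose k : ℝ) / (m.choose d : ℝ)) atTop (𝓝[>] 0) := by
    rw [tendsto_nhdsWithin_iff]
    refine ⟨ratio_tendsto_zero hkd, ?_⟩
    filter_upwards [eventually_ge_atTop d] with m hm
    have h1 : 0 < m.choose k := Nat.choose_pos (by omega)
    have h2 : 0 < m.choose d := Nat.choose_pos hm
    have h1' : (0:ℝ) < m.choose k := by exact_mod_cast h1
    have h2' : (0:ℝ) < m.choose d := by exact_mod_cast h2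
    exact div_pos h1' h2'
  have := h0.inv_tendsto_nhdsGT_zero
  simpa [Pi.inv_def, inv_div] using this


lemma jordan_pow_apply {n : ℕ} (lam : ℂ) (T : Matrix (Fin n) (Fin n) ℂ)
    (hT : ∀ i j : Fin n, T i j =
      if (j : ℕ) = (i : ℕ) then lam else if (j : ℕ) = (i : ℕ) + 1 then 1 else 0) :
    ∀ (m : ℕ) (i j : Fin n), (T ^ m) i j =
      if (i : ℕ) ≤ (j : ℕ) then
        (m.choose ((j : ℕ) - (i : ℕ)) : ℂ) * lam ^ (m - ((j : ℕ) - (i : ℕ)))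
      else 0 := by
  intro m
  induction m with
  | zero =>
    intro i j
    rw [pow_zero, Matrix.one_apply]
    by_cases h : i = j
    · subst h; simp
    · have hne : (i : ℕ) ≠ (j : ℕ) := fun hc => h (Fin.ext hc)
      by_cases h2 : (i : ℕ) ≤ (j : ℕ)
      · have : 0 < (j : ℕ) - (i : ℕ) := by omega
        simp [h, h2, Nat.choose_eq_zero_of_lt this]
      · simp [h, h2]
  | succ m ih =>
    intro i j
    rw [pow_succ', Matrix.mul_apply]
    -- key arithmetic fact to finish both cases
    have key : ∀ w : ℂ,
        (∀ hlt : (i : ℕ) + 1 < n, w = (T ^ m) ⟨(i : ℕ) + 1, hlt⟩ j) →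
        ((i : ℕ) + 1 < n ∨ w = 0) →
        lam * (T ^ m) i j + w =
          (if (i : ℕ) ≤ (j : ℕ) then
            ((m + 1).choose ((j : ℕ) - (i : ℕ)) : ℂ) *
              lam ^ (m + 1 - ((j : ℕ) - (i : ℕ))) else 0) := by
      intro w hw hcase
      rw [ih i j]
      by_cases hij : (i : ℕ) ≤ (j : ℕ)
      · by_cases hij' : (i : ℕ) + 1 ≤ (j : ℕ)
        · have hlt : (i : ℕ) + 1 < n := lt_of_le_of_lt hij' j.isLt
          rw [hw hlt, ih ⟨(i : ℕ) + 1, hlt⟩ j]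
          simp only [hij, if_true, hij', if_true]
          obtain ⟨e, he⟩ : ∃ e, (j : ℕ) - (i : ℕ) = e + 1 := ⟨(j:ℕ) - (i:ℕ) - 1, by omega⟩
          have he2 : (j : ℕ) - ((i : ℕ) + 1) = e := by omega
          rw [he, he2, Nat.succ_sub_succ]
          by_cases hem : e + 1 ≤ m
          · have h1 : m - (e + 1) + 1 = m - e := by omega
            rw [Nat.choose_succ_succ']
            push_cast
            rw [← h1, pow_succ]
            ring
          · have h1 : m.choose (e + 1) = 0 := Nat.choose_eq_zero_of_lt (by omega)
            rw [Nat.choose_succ_succ', h1]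
            push_cast
            ring
        · -- j = i
          have hji : (j : ℕ) = (i : ℕ) := by omega
          have hw0 : w = 0 := by
            rcases hcase with hlt | h0
            · rw [hw hlt, ih ⟨(i : ℕ) + 1, hlt⟩ j]
              simp [show ¬ ((i : ℕ) + 1 ≤ (j : ℕ)) from hij']
            · exact h0
          rw [hw0, hji]
          simp [Nat.sub_self, pow_succ]
          ring
      · have hw0 : w = 0 := by
          rcases hcase with hlt | h0
          · rw [hw hlt, ih ⟨(i : ℕ) + 1, hlt⟩ j]
            simp [show ¬ ((i : ℕ) + 1 ≤ (j : ℕ)) by omega]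
          · exact h0
        rw [hw0]
        simp [hij]
    by_cases hi : (i : ℕ) + 1 < n
    · set i' : Fin n := ⟨(i : ℕ) + 1, hi⟩ with hi'def
      have hii' : i ≠ i' := by
        intro hc
        have := congrArg Fin.val hc
        simp [hi'def] at this
      have hsum : ∀ l : Fin n, T i l * (T ^ m) l j =
          (if l = i then lam * (T ^ m) i j else 0)
          + (if l = i' then (T ^ m) i' j else 0) := by
        intro l
        rw [hT]
        rcases eq_or_ne l i with h1 | h1
        · subst h1; simp [hii']
        · rcases eq_or_ne l i' with h2 | h2
          · subst h2
            have hv : ((i' : Fin n) : ℕ) = (i : ℕ) + 1 := rfl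
            have hne : ((i' : Fin n) : ℕ) ≠ (i : ℕ) := by simp [hv]
            simp [hne, hv, h1]
          · have hv1 : (l : ℕ) ≠ (i : ℕ) := fun hc => h1 (Fin.ext hc)
            have hv2 : (l : ℕ) ≠ (i : ℕ) + 1 := fun hc => h2 (Fin.ext hc)
            simp [h1, h2, hv1, hv2]
      rw [Finset.sum_congr rfl (fun l _ => hsum l), Finset.sum_add_distrib,
        Finset.sum_ite_eq', Finset.sum_ite_eq']
      simp only [Finset.mem_univ, if_true]
      exact key _ (fun hlt => rfl) (Or.inl hi)
    · have hsum : ∀ l : Fin n, T i l * (T ^ m) l j =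
          (if l = i then lam * (T ^ m) i j else 0) := by
        intro l
        rw [hT]
        by_cases h1 : l = i
        · subst h1; simp
        · have hv1 : (l : ℕ) ≠ (i : ℕ) := fun hc => h1 (Fin.ext hc)
          have hv2 : (l : ℕ) ≠ (i : ℕ) + 1 := by
            have := l.isLt; omega
          simp [h1, hv1, hv2]
      rw [Finset.sum_congr rfl (fun l _ => hsum l), Finset.sum_ite_eq']
      simp only [Finset.mem_univ, if_true]
      have := key 0 (fun hlt => absurd hlt hi) (Or.inr rfl)
      rw [add_zero] at this
      exact this

/-- Let `T` be the `n × n` Jordan block (`n > 1`) with eigenvalue `λ`, `|λ| = 1`, acting on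
`ℂⁿ` with standard basis `v_1, …, v_n`.  For every nonzero `v = Σ α_j v_j` there is a unique
`k(v) ∈ ℕ` such that the set of cluster points of the sequence `C(m, k(v))⁻¹ • Tᵐ(v)` is
(nonempty and) contained in `span{v_1} \ {0}`; explicitly `k(v) = max{ j : α_j ≠ 0 } - 1`
(in `0`-based indexing, the largest index `j₀` with `α_{j₀} ≠ 0`). -/
theorem jordan_block_unique_normalization (n : ℕ) (hn : 1 < n) (lam : ℂ)
    (hlam : ‖lam‖ = 1) (T : Matrix (Fin n) (Fin n) ℂ)
    (hT : ∀ i j : Fin n, T i j =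
      if (j : ℕ) = (i : ℕ) then lam else if (j : ℕ) = (i : ℕ) + 1 then 1 else 0)
    (v : Fin n → ℂ) (hv : v ≠ 0)
    (P : ℕ → Prop)
    (hP : ∀ k : ℕ, P k ↔
      ({p : Fin n → ℂ |
          MapClusterPt p atTop fun m : ℕ => ((m.choose k : ℂ))⁻¹ • (T ^ m).mulVec v}.Nonempty ∧
        {p : Fin n → ℂ |
          MapClusterPt p atTop fun m : ℕ => ((m.choose k : ℂ))⁻¹ • (T ^ m).mulVec v} ⊆
          ((Submodule.span ℂ {Pi.single (⟨0, by omega⟩ : Fin n) (1 : ℂ)} : Submodule ℂ (Fin n → ℂ)) : Set (Fin n → ℂ)) \ {0}))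
    (j₀ : Fin n) (hj₀ : v j₀ ≠ 0) (hmax : ∀ i : Fin n, j₀ < i → v i = 0) :
    (∃! k : ℕ, P k) ∧ P (j₀ : ℕ) := by
  have hpow := jordan_pow_apply lam T hT
  set K : ℕ := (j₀ : ℕ) with hK
  set i0 : Fin n := ⟨0, by omega⟩ with hi0
  set e₀ : Fin n → ℂ := Pi.single i0 (1 : ℂ) with he₀
  set u : ℕ → ℕ → Fin n → ℂ :=
    fun k m => ((m.choose k : ℂ))⁻¹ • (T ^ m).mulVec v with hudef
  have hvj : ∀ j : Fin n, K < (j : ℕ) → v j = 0 := by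
    intro j hj
    exact hmax j (Fin.lt_def.mpr hj)
  have hvK : (0 : ℝ) < ‖v j₀‖ := norm_pos_iff.mpr hj₀
  -- coordinate formula
  have hu : ∀ (k m : ℕ) (i : Fin n), u k m i =
      ∑ j : Fin n, ((m.choose k : ℂ))⁻¹ *
        ((if (i : ℕ) ≤ (j : ℕ) then
          (m.choose ((j : ℕ) - (i : ℕ)) : ℂ) * lam ^ (m - ((j : ℕ) - (i : ℕ)))
         else 0) * v j) := by
    intro k m i
    simp only [hudef, Pi.smul_apply, smul_eq_mul, Matrix.mulVec, dotProduct,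
      Finset.mul_sum]
    exact Finset.sum_congr rfl fun j _ => by rw [hpow m i j]
  -- each term tends to zero when the relevant binomial index is < k
  have hterm : ∀ (k : ℕ) (i j : Fin n),
      (v j = 0 ∨ ¬ ((i : ℕ) ≤ (j : ℕ)) ∨ (j : ℕ) - (i : ℕ) < k) →
      Tendsto (fun m : ℕ => ((m.choose k : ℂ))⁻¹ *
        ((if (i : ℕ) ≤ (j : ℕ) then
          (m.choose ((j : ℕ) - (i : ℕ)) : ℂ) * lam ^ (m - ((j : ℕ) - (i : ℕ)))
         else 0) * v j)) atTop (𝓝 0) := by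
    intro k i j h
    rcases h with h | h | h
    · simpa [h] using tendsto_const_nhds (α := ℂ) (f := atTop (α := ℕ))
    · simpa [h] using tendsto_const_nhds (α := ℂ) (f := atTop (α := ℕ))
    · by_cases hij : (i : ℕ) ≤ (j : ℕ)
      · set d : ℕ := (j : ℕ) - (i : ℕ) with hd
        rw [tendsto_zero_iff_norm_tendsto_zero]
        have heq : (fun m : ℕ => ‖((m.choose k : ℂ))⁻¹ *
            ((if (i : ℕ) ≤ (j : ℕ) then
              (m.choose ((j : ℕ) - (i : ℕ)) : ℂ) * lam ^ (m - ((j : ℕ) - (i : ℕ)))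
             else 0) * v j)‖)
            = fun m : ℕ => (m.choose d : ℝ) / (m.choose k : ℝ) * ‖v j‖ := by
          funext m
          rw [if_pos hij]
          rw [norm_mul, norm_mul, norm_mul, norm_inv, norm_pow, hlam, one_pow, mul_one]
          push_cast
          rw [Complex.norm_natCast, Complex.norm_natCast]
          rw [div_eq_inv_mul, mul_assoc]
        rw [heq]
        simpa using (ratio_tendsto_zero h).mul_const ‖v j‖
      · simpa [hij] using tendsto_const_nhds (α := ℂ) (f := atTop (α := ℕ))
  -- coordinates tend to zero when all surviving indices are < k
  have hsmall : ∀ (k : ℕ) (i : Fin n),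
      (∀ j : Fin n, v j ≠ 0 → (i : ℕ) ≤ (j : ℕ) → (j : ℕ) - (i : ℕ) < k) →
      Tendsto (fun m : ℕ => u k m i) atTop (𝓝 0) := by
    intro k i hk
    have h := tendsto_finset_sum (Finset.univ : Finset (Fin n))
      (fun j _ => hterm k i j (by
        by_cases h1 : v j = 0
        · exact Or.inl h1
        · by_cases h2 : (i : ℕ) ≤ (j : ℕ)
          · exact Or.inr (Or.inr (hk j h1 h2))
          · exact Or.inr (Or.inl h2)))
    simp only [Finset.sum_const_zero] at h
    exact h.congr (fun m => (hu k m i).symm)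
  -- the main coordinate behaviour for k = K
  have hmain0 : Tendsto (fun m : ℕ => u K m i0 - lam ^ (m - K) * v j₀) atTop (𝓝 0) := by
    have hrepr : ∀ m : ℕ, u K m i0 - lam ^ (m - K) * v j₀ =
        ∑ j : Fin n, (((m.choose K : ℂ))⁻¹ *
          ((if (i0 : ℕ) ≤ (j : ℕ) then
            (m.choose ((j : ℕ) - (i0 : ℕ)) : ℂ) * lam ^ (m - ((j : ℕ) - (i0 : ℕ)))
           else 0) * v j)
          - (if j = j₀ then lam ^ (m - K) * v j₀ else 0)) := by
      intro m
      rw [Finset.sum_sub_distrib, ← hu, Finset.sum_ite_eq' Finset.univ j₀]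
      simp
    have hj' : ∀ j : Fin n, Tendsto (fun m : ℕ => (((m.choose K : ℂ))⁻¹ *
          ((if (i0 : ℕ) ≤ (j : ℕ) then
            (m.choose ((j : ℕ) - (i0 : ℕ)) : ℂ) * lam ^ (m - ((j : ℕ) - (i0 : ℕ)))
           else 0) * v j)
          - (if j = j₀ then lam ^ (m - K) * v j₀ else 0))) atTop (𝓝 0) := by
      intro j
      have hival : (i0 : ℕ) = 0 := rfl
      rcases eq_or_ne j j₀ with hj | hj
      · subst hj
        apply Tendsto.congr' (f₁ := fun _ : ℕ => (0 : ℂ))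
        · filter_upwards [eventually_ge_atTop K] with m hm
          have hpos : (m.choose K : ℂ) ≠ 0 := by
            exact_mod_cast (Nat.choose_pos hm).ne'
          symm
          rw [if_pos rfl, if_pos (by omega : (i0 : ℕ) ≤ (j : ℕ))]
          have hsub : (j : ℕ) - (i0 : ℕ) = K := by omega
          rw [hsub, mul_assoc, inv_mul_cancel_left₀ hpos, sub_self]
        · exact tendsto_const_nhds
      · simp only [if_neg hj, sub_zero]
        exact hterm K i0 j (by
          by_cases h1 : v j = 0
          · exact Or.inl h1
          · refine Or.inr (Or.inr ?_)
            have hle : (j : ℕ) ≤ K := by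
              by_contra hc
              exact h1 (hvj j (by omega))
            have hne : (j : ℕ) ≠ K := fun hc => hj (Fin.ext hc)
            omega)
    have h := tendsto_finset_sum (Finset.univ : Finset (Fin n)) (fun j _ => hj' j)
    simp only [Finset.sum_const_zero] at h
    exact h.congr (fun m => (hrepr m).symm)
  -- full vector convergence for k = K
  have hA : Tendsto (fun m : ℕ => u K m - (lam ^ (m - K) * v j₀) • e₀) atTop (𝓝 0) := by
    rw [tendsto_pi_nhds]
    intro i
    rcases eq_or_ne i i0 with hi | hi
    · subst hi
      have : ∀ m : ℕ, (u K m - (lam ^ (m - K) * v j₀) • e₀) i0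
          = u K m i0 - lam ^ (m - K) * v j₀ := by
        intro m
        simp [he₀, Pi.single_eq_same]
      simpa [this] using hmain0
    · have hcoord : ∀ m : ℕ, (u K m - (lam ^ (m - K) * v j₀) • e₀) i = u K m i := by
        intro m
        simp [he₀, Pi.single_eq_of_ne hi]
      have hs := hsmall K i (by
        intro j h1 h2
        have hle : (j : ℕ) ≤ K := by
          by_contra hc
          exact h1 (hvj j (by omega))
        have hipos : 0 < (i : ℕ) := by
          rcases Nat.eq_zero_or_pos (i : ℕ) with h0 | h0
          · exact absurd (Fin.ext (by simp [hi0, h0]) : i = i0) hi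
          · exact h0
        omega)
      simpa [hcoord] using hs
  -- norm of the main coordinate tends to ‖v j₀‖
  have hnormK : Tendsto (fun m : ℕ => ‖u K m i0‖) atTop (𝓝 ‖v j₀‖) := by
    have h1 : Tendsto (fun m : ℕ => ‖u K m i0‖ - ‖v j₀‖) atTop (𝓝 0) := by
      refine squeeze_zero_norm (fun m => ?_) (tendsto_zero_iff_norm_tendsto_zero.mp hmain0)
      · have hb : ‖lam ^ (m - K) * v j₀‖ = ‖v j₀‖ := by
          rw [norm_mul, norm_pow, hlam, one_pow, one_mul]
        calc ‖‖u K m i0‖ - ‖v j₀‖‖ = |‖u K m i0‖ - ‖lam ^ (m - K) * v j₀‖| := by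
              rw [hb, Real.norm_eq_abs]
        _ ≤ ‖u K m i0 - lam ^ (m - K) * v j₀‖ := abs_norm_sub_norm_le _ _
    have := h1.add_const ‖v j₀‖
    simpa using this
  -- P K holds
  have hPK : P K := by
    rw [hP K]
    have hballmem : ∀ {ε : ℝ}, 0 < ε → ∀ᶠ m in atTop,
        ‖u K m - (lam ^ (m - K) * v j₀) • e₀‖ < ε := by
      intro ε hε
      have := hA.eventually (Metric.ball_mem_nhds (0 : Fin n → ℂ) hε)
      filter_upwards [this] with m hm
      simpa [mem_ball_zero_iff] using hm
    constructor
    · -- nonempty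
      set R : ℝ := ‖v j₀‖ * ‖e₀‖ + 1 with hR
      have hbdd : ∀ᶠ m in atTop, u K m ∈ Metric.closedBall (0 : Fin n → ℂ) R := by
        filter_upwards [hballmem one_pos] with m hm
        rw [Metric.mem_closedBall, dist_zero_right]
        have hmain_norm : ‖(lam ^ (m - K) * v j₀) • e₀‖ = ‖v j₀‖ * ‖e₀‖ := by
          rw [norm_smul, norm_mul, norm_pow, hlam, one_pow, one_mul]
        calc ‖u K m‖ = ‖(lam ^ (m - K) * v j₀) • e₀ + (u K m - (lam ^ (m - K) * v j₀) • e₀)‖ := by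
              ring_nf
        _ ≤ ‖(lam ^ (m - K) * v j₀) • e₀‖ + ‖u K m - (lam ^ (m - K) * v j₀) • e₀‖ := norm_add_le _ _
        _ ≤ ‖v j₀‖ * ‖e₀‖ + 1 := by rw [hmain_norm]; linarith
      haveI : (map (u K) atTop).NeBot := atTop_neBot.map _
      obtain ⟨p, _, hp⟩ := (isCompact_closedBall (0 : Fin n → ℂ) R).exists_clusterPt
        (le_principal_iff.mpr (mem_map.mpr hbdd))
      exact ⟨p, hp⟩
    · -- subset
      intro p hp
      have hp' : MapClusterPt p atTop (u K) := hp
      set S : Set (Fin n → ℂ) := (fun c : ℂ => c • e₀) '' Metric.sphere 0 ‖v j₀‖ with hS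
      have hScpt : IsCompact S := (isCompact_sphere (0 : ℂ) ‖v j₀‖).image
        (continuous_id.smul continuous_const)
      have hpS : p ∈ S := by
        rw [← hScpt.isClosed.closure_eq]
        rw [Metric.mem_closure_iff]
        intro ε hε
        have hfreq := (mapClusterPt_iff_frequently.mp hp') (Metric.ball p (ε / 2))
          (Metric.ball_mem_nhds p (by positivity))
        have hev : ∀ᶠ m in atTop, ‖u K m - (lam ^ (m - K) * v j₀) • e₀‖ < ε / 2 :=
          hballmem (by positivity)
        obtain ⟨m, hm1, hm2⟩ := (hfreq.and_eventually hev).exists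
        refine ⟨(lam ^ (m - K) * v j₀) • e₀, ⟨lam ^ (m - K) * v j₀, ?_, rfl⟩, ?_⟩
        · rw [mem_sphere_zero_iff_norm, norm_mul, norm_pow, hlam, one_pow, one_mul]
        · have h1 : dist p (u K m) < ε / 2 := by
            rw [dist_comm]
            exact Metric.mem_ball.mp hm1
          have h2 : dist (u K m) ((lam ^ (m - K) * v j₀) • e₀) < ε / 2 := by
            rw [dist_eq_norm]; exact hm2
          calc dist p ((lam ^ (m - K) * v j₀) • e₀)
              ≤ dist p (u K m) + dist (u K m) ((lam ^ (m - K) * v j₀) • e₀) := dist_triangle _ _ _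
          _ < ε / 2 + ε / 2 := by linarith
          _ = ε := by ring
      obtain ⟨c, hc, rfl⟩ := hpS
      rw [mem_sphere_zero_iff_norm] at hc
      have hc0 : c ≠ 0 := by
        intro h0
        rw [h0, norm_zero] at hc
        exact absurd hc.symm (ne_of_gt hvK)
      constructor
      · exact Submodule.mem_span_singleton.mpr ⟨c, rfl⟩
      · simp only [Set.mem_singleton_iff]
        intro h0
        have := congrFun h0 i0
        rw [Pi.smul_apply, he₀, Pi.single_eq_same, Pi.zero_apply, smul_eq_mul, mul_one] at this
        exact hc0 this
  -- P fails for k > K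
  have hnot_gt : ∀ k : ℕ, K < k → ¬ P k := by
    intro k hk hPk
    have hlim : Tendsto (u k) atTop (𝓝 0) := by
      rw [tendsto_pi_nhds]
      intro i
      have := hsmall k i (by
        intro j h1 h2
        have hle : (j : ℕ) ≤ K := by
          by_contra hc
          exact h1 (hvj j (by omega))
        omega)
      simpa using this
    obtain ⟨⟨p, hp⟩, hsub⟩ := (hP k).mp hPk
    have hp0 : p = 0 := by
      haveI : (map (u k) atTop).NeBot := atTop_neBot.map _
      have hcl0 : ClusterPt p (map (u k) atTop) := hp
      have hcl : ClusterPt p (𝓝 (0 : Fin n → ℂ)) := hcl0.mono hlim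
      exact eq_of_nhds_neBot hcl.neBot
    have := hsub hp
    rw [hp0] at this
    exact this.2 rfl
  -- P fails for k < K
  have hnot_lt : ∀ k : ℕ, k < K → ¬ P k := by
    intro k hk hPk
    have hev1 : ∀ᶠ m in atTop, ‖v j₀‖ / 2 < ‖u K m i0‖ :=
      hnormK.eventually (eventually_gt_nhds (by linarith))
    have hrel : ∀ᶠ m in atTop, ‖u k m i0‖ =
        (m.choose K : ℝ) / (m.choose k : ℝ) * ‖u K m i0‖ := by
      filter_upwards [eventually_ge_atTop K] with m hm
      have hcK : (0 : ℝ) < (m.choose K : ℝ) := by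
        exact_mod_cast Nat.choose_pos hm
      have hck : (0 : ℝ) < (m.choose k : ℝ) := by
        exact_mod_cast Nat.choose_pos (by omega : k ≤ m)
      have e1 : u k m i0 = ((m.choose k : ℂ))⁻¹ * ((T ^ m).mulVec v i0) := rfl
      have e2 : u K m i0 = ((m.choose K : ℂ))⁻¹ * ((T ^ m).mulVec v i0) := rfl
      rw [e1, e2, norm_mul, norm_mul, norm_inv, norm_inv, Complex.norm_natCast,
        Complex.norm_natCast]
      field_simp
    have hinf : Tendsto (fun m : ℕ => ‖u k m i0‖) atTop atTop := by
      apply tendsto_atTop_mono' atTop (f₁ := fun m : ℕ =>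
        (m.choose K : ℝ) / (m.choose k : ℝ) * (‖v j₀‖ / 2))
      · filter_upwards [hrel, hev1] with m h1 h2
        rw [h1]
        apply mul_le_mul_of_nonneg_left (le_of_lt h2)
        positivity
      · exact (ratio_tendsto_atTop hk).atTop_mul_const (by positivity)
    obtain ⟨⟨p, hp⟩, -⟩ := (hP k).mp hPk
    have hfreq := (mapClusterPt_iff_frequently.mp hp) (Metric.ball p 1) (Metric.ball_mem_nhds p one_pos)
    have hev2 : ∀ᶠ m in atTop, ‖p‖ + 1 ≤ ‖u k m i0‖ := hinf.eventually_ge_atTop _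
    obtain ⟨m, hm1, hm2⟩ := (hfreq.and_eventually hev2).exists
    have hball : ‖u k m - p‖ < 1 := by
      rw [← dist_eq_norm]
      exact Metric.mem_ball.mp hm1
    have hle : ‖u k m i0‖ ≤ ‖u k m‖ := norm_le_pi_norm _ _
    have hfin : ‖u k m‖ ≤ ‖u k m - p‖ + ‖p‖ := by
      calc ‖u k m‖ = ‖(u k m - p) + p‖ := by rw [sub_add_cancel]
      _ ≤ ‖u k m - p‖ + ‖p‖ := norm_add_le _ _
    linarith
  refine ⟨⟨K, hPK, fun k hk => ?_⟩, hPK⟩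
  rcases lt_trichotomy k K with h | h | h
  · exact absurd hk (hnot_lt k h)
  · exact h
  · exact absurd hk (hnot_gt k h)
end

section
/- Let T be an invertible linear map on a finite-dimensional complex vector space V, all of whose eigenvalues have absolute value 1. Then for every nonzero v ∈ V there is a unique k(v,T) ∈ ℕ ∪ {0} such that the set of cluster points of the sequence C(m, k(v,T))^(−1) · T^m(v) is nonempty and contained in Eve(T) \ {0}, where Eve(T) is the span of the eigenvectors of T. -/
open Filter
open Topology

section AuxLemmas

lemma auxChooseMono {a b m : ℕ} (hab : a ≤ b) (hb : 2 * b ≤ m) :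
    m.choose a ≤ m.choose b := by
  induction hab with
  | refl => exact le_rfl
  | @step b' hb' ih =>
    have h2 : 2 * b' ≤ m := by omega
    refine (ih h2).trans (Nat.choose_le_succ_of_lt_half_left ?_)
    omega

lemma auxRatioTendsto {j k : ℕ} (h : j < k) :
    Tendsto (fun m : ℕ => (m.choose j : ℝ) / (m.choose k : ℝ)) atTop (𝓝 0) := by
  have hb : Tendsto (fun m : ℕ => (k : ℝ) / ((m - k + 1 : ℕ) : ℝ)) atTop (𝓝 0) := by
    apply Tendsto.div_atTop tendsto_const_nhds
    exact tendsto_natCast_atTop_atTop.comp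
      (tendsto_atTop_atTop.2 fun b => ⟨b + k, fun a ha => by omega⟩)
  apply squeeze_zero' (g := fun m : ℕ => (k : ℝ) / ((m - k + 1 : ℕ) : ℝ)) ?_ ?_ hb
  · filter_upwards [eventually_ge_atTop k] with m hm
    positivity
  · filter_upwards [eventually_ge_atTop (2 * k)] with m hm
    have hk1 : 1 ≤ k := by omega
    have hkm : k ≤ m := by omega
    have hpos : (0 : ℝ) < m.choose k := by
      exact_mod_cast Nat.choose_pos hkm
    -- identity : m.choose k * k = m.choose (k-1) * (m - k + 1)
    have hid : m.choose k * k = m.choose (k - 1) * (m - k + 1) := by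
      have := Nat.choose_succ_right_eq m (k - 1)
      have hk : k - 1 + 1 = k := by omega
      rw [hk] at this
      rw [this]
      congr 1
      omega
    have hmono : m.choose j ≤ m.choose (k - 1) := auxChooseMono (by omega) (by omega)
    rw [div_le_div_iff₀ hpos (by exact_mod_cast Nat.succ_pos (m - k))]
    calc (m.choose j : ℝ) * (m - k + 1 : ℕ) ≤ (m.choose (k-1) : ℝ) * (m - k + 1 : ℕ) := by
          gcongr
          all_goals exact_mod_cast hmono
      _ = (m.choose k : ℝ) * k := by exact_mod_cast hid.symm
      _ = (k : ℝ) * m.choose k := by ring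

variable {V : Type*} [NormedAddCommGroup V] [NormedSpace ℂ V]

lemma auxClusterCongr {u w : ℕ → V} (h : Tendsto (fun m => u m - w m) atTop (𝓝 0))
    {p : V} (hp : MapClusterPt p atTop u) : MapClusterPt p atTop w := by
  rw [mapClusterPt_iff_frequently] at hp ⊢
  intro s hs
  rcases Metric.mem_nhds_iff.1 hs with ⟨ε, hε, hball⟩
  have h1 : ∀ᶠ m in atTop, ‖u m - w m‖ < ε / 2 := by
    have := h.eventually (Metric.ball_mem_nhds (0 : V) (by positivity : (0:ℝ) < ε / 2))
    simpa [Metric.mem_ball, dist_eq_norm] using this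
  have h2 : ∃ᶠ m in atTop, dist (u m) p < ε / 2 :=
    hp _ (Metric.ball_mem_nhds p (by positivity))
  refine (h2.and_eventually h1).mono fun m ⟨h2m, h1m⟩ => ?_
  apply hball
  have : dist (w m) p < ε := by
    calc dist (w m) p ≤ dist (w m) (u m) + dist (u m) p := dist_triangle _ _ _
      _ < ε / 2 + ε / 2 := by
          rw [dist_comm, dist_eq_norm]
          exact add_lt_add h1m h2m
      _ = ε := by ring
  exact Metric.mem_ball.2 this

lemma auxExistsCluster [FiniteDimensional ℂ V] {u : ℕ → V} {R : ℝ}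
    (h : ∀ᶠ m in atTop, ‖u m‖ ≤ R) : ∃ p, MapClusterPt p atTop u := by
  rcases eventually_atTop.1 h with ⟨M, hM⟩
  have hcompact : IsCompact (Metric.closedBall (0 : V) R) := isCompact_closedBall _ _
  have hmem : ∀ i, u (i + M) ∈ Metric.closedBall (0 : V) R := fun i => by
    simpa [Metric.mem_closedBall, dist_eq_norm] using hM (i + M) (by omega)
  obtain ⟨p, -, φ, hφ, hconv⟩ := hcompact.tendsto_subseq hmem
  have hφ' : Tendsto (fun i => φ i + M) atTop atTop :=
    tendsto_atTop_mono (fun i => Nat.le_add_right _ _) hφ.tendsto_atTop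
  have hconv' : Tendsto (u ∘ fun i => φ i + M) atTop (𝓝 p) := hconv
  exact ⟨p, MapClusterPt.of_comp hφ' hconv'.mapClusterPt⟩

lemma auxClusterStructure [FiniteDimensional ℂ V] (S : Finset ℂ) (hS1 : ∀ μ ∈ S, ‖μ‖ = 1)
    (w : ℂ → V) {p : V}
    (hp : MapClusterPt p atTop (fun m : ℕ => ∑ μ ∈ S, μ ^ m • w μ)) :
    ∃ c : ℂ → ℂ, (∀ μ ∈ S, ‖c μ‖ = 1) ∧ p = ∑ μ ∈ S, c μ • w μ := by
  obtain ⟨ψ, hψ, hconv⟩ := TopologicalSpace.FirstCountableTopology.tendsto_subseq hp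
  set h : ℕ → (S → ℂ) := fun i μ => (μ : ℂ) ^ ψ i with hh
  have hmem : ∀ i, h i ∈ Metric.closedBall (0 : S → ℂ) 1 := by
    intro i
    rw [Metric.mem_closedBall, dist_zero_right]
    refine (pi_norm_le_iff_of_nonneg zero_le_one).2 fun μ => ?_
    simp only [hh]
    rw [norm_pow, hS1 μ μ.2, one_pow]
  obtain ⟨cf, -, φ, hφ, hcf⟩ := (isCompact_closedBall (0 : S → ℂ) 1).tendsto_subseq hmem
  have hcoord : ∀ μ : S, Tendsto (fun i => (μ : ℂ) ^ ψ (φ i)) atTop (𝓝 (cf μ)) := by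
    intro μ
    exact tendsto_pi_nhds.1 hcf μ
  have hnorm : ∀ μ : S, ‖cf μ‖ = 1 := by
    intro μ
    have h1 : Tendsto (fun i => ‖(μ : ℂ) ^ ψ (φ i)‖) atTop (𝓝 ‖cf μ‖) := (hcoord μ).norm
    have h2 : (fun i => ‖(μ : ℂ) ^ ψ (φ i)‖) = fun _ => (1 : ℝ) := by
      funext i; rw [norm_pow, hS1 μ μ.2, one_pow]
    rw [h2] at h1
    exact (tendsto_nhds_unique h1 tendsto_const_nhds).symm ▸ rfl
  have hsum : Tendsto (fun i => ∑ μ ∈ S.attach, ((μ : ℂ) ^ ψ (φ i)) • w μ) atTop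
      (𝓝 (∑ μ ∈ S.attach, cf μ • w μ)) :=
    tendsto_finset_sum _ fun μ _ => (hcoord μ).smul_const (w μ)
  have hsum' : (fun i => ∑ μ ∈ S.attach, ((μ : ℂ) ^ ψ (φ i)) • w μ)
      = fun i => ∑ μ ∈ S, μ ^ ψ (φ i) • w μ := by
    funext i
    exact Finset.sum_attach S fun μ => μ ^ ψ (φ i) • w μ
  rw [hsum'] at hsum
  have hsub : Tendsto (fun i => ∑ μ ∈ S, μ ^ ψ (φ i) • w μ) atTop (𝓝 p) :=
    hconv.comp hφ.tendsto_atTop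
  have hpq : p = ∑ μ ∈ S.attach, cf μ • w μ := tendsto_nhds_unique hsub hsum
  refine ⟨fun μ => if hμ : μ ∈ S then cf ⟨μ, hμ⟩ else 1, fun μ hμ => by
    show ‖(if hμ : μ ∈ S then cf ⟨μ, hμ⟩ else 1)‖ = 1
    rw [dif_pos hμ]; exact hnorm ⟨μ, hμ⟩, ?_⟩
  rw [hpq, ← Finset.sum_attach S fun μ => (if hμ : μ ∈ S then cf ⟨μ, hμ⟩ else 1) • w μ]
  exact Finset.sum_congr rfl fun μ _ => by rw [dif_pos μ.2]

end AuxLemmas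


/-- Let `T` be an invertible linear map on a finite-dimensional complex vector space `V`,
all of whose eigenvalues have absolute value `1`.  Then for every nonzero `v ∈ V` there is
a unique `k(v,T) ∈ ℕ` such that the set of cluster points of the sequence
`C(m, k(v,T))⁻¹ • Tᵐ(v)` is nonempty and contained in `Eve(T) \ {0}`, where `Eve(T)` is
the span of the eigenvectors of `T`. -/
theorem unique_normalization_of_unitary_eigenvalues (V : Type*) [NormedAddCommGroup V]
    [NormedSpace ℂ V] [FiniteDimensional ℂ V] (T : V →ₗ[ℂ] V)
    (hT : Function.Bijective T)
    (heig : ∀ μ : ℂ, Module.End.HasEigenvalue T μ → ‖μ‖ = 1)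
    (Eve : Submodule ℂ V)
    (hEve : Eve = Submodule.span ℂ {w : V | ∃ μ : ℂ, Module.End.HasEigenvector T μ w})
    (v : V) (hv : v ≠ 0) :
    ∃! k : ℕ,
      {p : V | MapClusterPt p atTop fun m : ℕ => ((m.choose k : ℂ))⁻¹ • (T ^ m) v}.Nonempty ∧
        {p : V | MapClusterPt p atTop fun m : ℕ => ((m.choose k : ℂ))⁻¹ • (T ^ m) v} ⊆
          (Eve : Set V) \ {0} := by
  classical
  set n := Module.finrank ℂ V with hn
  have htop := Module.End.iSup_maxGenEigenspace_eq_top (T : Module.End ℂ V)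
  have hvtop : v ∈ ⨆ μ : ℂ, Module.End.maxGenEigenspace T μ := by rw [htop]; trivial
  obtain ⟨c, hc, hcv⟩ := (Submodule.mem_iSup_iff_exists_finsupp _ v).1 hvtop
  set S : Finset ℂ := c.support with hS
  have hv_sum : ∑ μ ∈ S, c μ = v := by rw [← hcv]; rfl
  have hSne : S.Nonempty := by
    rw [hS, Finsupp.support_nonempty_iff]
    rintro rfl
    exact hv (by simp [← hcv])
  set N : ℂ → Module.End ℂ V := fun μ => T - μ • 1 with hN
  have hnil : ∀ μ, ((N μ) ^ n) (c μ) = 0 := by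
    intro μ
    have := hc μ
    rw [Module.End.maxGenEigenspace_eq_genEigenspace_finrank,
      Module.End.mem_genEigenspace_nat] at this
    exact this
  have heig1 : ∀ μ ∈ S, ‖μ‖ = 1 := by
    intro μ hμ
    apply heig
    apply Module.End.hasEigenvalue_of_hasGenEigenvalue (k := n)
    rw [Module.End.hasGenEigenvalue_iff]
    intro hbot
    have hmem : c μ ∈ Module.End.genEigenspace T μ n :=
      Module.End.mem_genEigenspace_nat.2 (hnil μ)
    rw [hbot, Submodule.mem_bot] at hmem
    exact Finsupp.mem_support_iff.1 hμ hmem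
  set d : ℂ → ℕ := fun μ => Nat.findGreatest (fun j => ((N μ) ^ j) (c μ) ≠ 0) n with hd
  set k := S.sup d with hk
  have hd_le : ∀ μ ∈ S, d μ ≤ k := fun μ hμ => Finset.le_sup hμ
  have hd_spec : ∀ μ ∈ S, ((N μ) ^ (d μ)) (c μ) ≠ 0 := by
    intro μ hμ
    have hm0 : (N μ ^ 0) (c μ) ≠ 0 := by simpa using Finsupp.mem_support_iff.1 hμ
    exact Nat.findGreatest_spec (P := fun j => (N μ ^ j) (c μ) ≠ 0) (Nat.zero_le n) hm0
  have hd_zero : ∀ μ ∈ S, ∀ j, d μ < j → ((N μ) ^ j) (c μ) = 0 := by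
    intro μ hμ j hj
    by_cases hjn : j ≤ n
    · by_contra hne
      exact Nat.findGreatest_is_greatest hj hjn hne
    · have h1 : ((N μ) ^ j) (c μ) = ((N μ) ^ (j - n)) (((N μ) ^ n) (c μ)) := by
        rw [← Module.End.mul_apply, ← pow_add]
        congr 2
        omega
      rw [h1, hnil μ, map_zero]
  set w : ℂ → V := fun μ => ((N μ) ^ k) (c μ) with hw
  have hNk1 : ∀ μ ∈ S, ((N μ) ^ (k + 1)) (c μ) = 0 := fun μ hμ =>
    hd_zero μ hμ _ (by have := hd_le μ hμ; omega)
  have hw_eig : ∀ μ ∈ S, T (w μ) = μ • w μ := by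
    intro μ hμ
    have h0 : (N μ) (w μ) = 0 := by
      show (N μ) (((N μ) ^ k) (c μ)) = 0
      rw [← Module.End.mul_apply, ← pow_succ']
      exact hNk1 μ hμ
    have h1 : T (w μ) - μ • w μ = 0 := by
      simpa [hN, LinearMap.sub_apply, LinearMap.smul_apply, Module.End.one_apply] using h0
    exact sub_eq_zero.1 h1
  obtain ⟨μ0, hμ0S, hμ0⟩ := Finset.exists_mem_eq_sup S hSne d
  have hw0 : w μ0 ≠ 0 := by
    show ((N μ0) ^ k) (c μ0) ≠ 0
    rw [hk, hμ0]
    exact hd_spec μ0 hμ0S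
  -- binomial expansion
  have hpow : ∀ (μ : ℂ) (m : ℕ), (T ^ m) (c μ)
      = ∑ j ∈ Finset.range (m + 1),
          ((m.choose j : ℂ) * μ ^ (m - j)) • ((N μ ^ j) (c μ)) := by
    intro μ m
    have hcomm : Commute (N μ) (μ • (1 : Module.End ℂ V)) := (Commute.one_right (N μ)).smul_right μ
    have hTN : T = N μ + μ • 1 := by rw [hN]; simp
    calc (T ^ m) (c μ) = ((N μ + μ • 1) ^ m) (c μ) := by rw [← hTN]
      _ = (∑ j ∈ Finset.range (m + 1),
            (N μ) ^ j * (μ • 1) ^ (m - j) * (m.choose j : Module.End ℂ V)) (c μ) := by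
          rw [hcomm.add_pow]
      _ = _ := by
          rw [LinearMap.sum_apply]
          refine Finset.sum_congr rfl fun j hj => ?_
          rw [smul_pow, one_pow]
          simp only [Module.End.mul_apply, Module.End.natCast_apply, LinearMap.smul_apply,
            Module.End.one_apply, map_nsmul, map_smul]
          rw [mul_smul, Nat.cast_smul_eq_nsmul]
  set seq : ℕ → V := fun m => ((m.choose k : ℂ))⁻¹ • (T ^ m) v with hseq
  set a : ℕ → V := fun t => ∑ μ ∈ S, μ ^ t • w μ with ha
  set err : ℕ → V := fun m => ∑ μ ∈ S, ∑ j ∈ Finset.range k,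
      (((m.choose j : ℂ) / (m.choose k : ℂ)) * μ ^ (m - j)) • ((N μ ^ j) (c μ)) with herrdef
  have hkey : ∀ m, k ≤ m → seq m - a (m - k) = err m := by
    intro m hkm
    have hchoose : ((m.choose k : ℂ)) ≠ 0 := Nat.cast_ne_zero.2 (Nat.choose_pos hkm).ne'
    have h1 : (T ^ m) v = ∑ μ ∈ S, (T ^ m) (c μ) := by rw [← hv_sum, map_sum]
    show (m.choose k : ℂ)⁻¹ • (T ^ m) v - ∑ μ ∈ S, μ ^ (m - k) • w μ = err m
    rw [h1, Finset.smul_sum, ← Finset.sum_sub_distrib]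
    refine Finset.sum_congr rfl fun μ hμ => ?_
    rw [hpow μ m]
    have h2 : ∑ j ∈ Finset.range (m + 1), ((m.choose j : ℂ) * μ ^ (m - j)) • ((N μ ^ j) (c μ))
        = ∑ j ∈ Finset.range (k + 1), ((m.choose j : ℂ) * μ ^ (m - j)) • ((N μ ^ j) (c μ)) := by
      refine (Finset.sum_subset (Finset.range_subset_range.2 (by omega)) ?_).symm
      intro j hj hj'
      have hjk : k + 1 ≤ j := by
        simp only [Finset.mem_range] at hj hj'
        omega
      have hz : (N μ ^ j) (c μ) = 0 := by
        have h3 : (N μ ^ j) (c μ) = ((N μ) ^ (j - (k + 1))) (((N μ) ^ (k + 1)) (c μ)) := by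
          rw [← Module.End.mul_apply, ← pow_add]
          congr 2
          omega
        rw [h3, hNk1 μ hμ, map_zero]
      rw [hz, smul_zero]
    rw [h2, Finset.sum_range_succ, smul_add]
    have h3 : (m.choose k : ℂ)⁻¹ • (((m.choose k : ℂ) * μ ^ (m - k)) • ((N μ ^ k) (c μ)))
        = μ ^ (m - k) • w μ := by
      rw [smul_smul]
      congr 1
      field_simp
    rw [h3, add_sub_cancel_right, Finset.smul_sum]
    refine Finset.sum_congr rfl fun j hj => ?_
    rw [smul_smul]
    congr 1
    field_simp
  have herr : Tendsto err atTop (𝓝 0) := by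
    have h0 : Tendsto err atTop (𝓝 (∑ μ ∈ S, ∑ _j ∈ Finset.range k, (0 : V))) := by
      refine tendsto_finset_sum _ fun μ hμ => tendsto_finset_sum _ fun j hj => ?_
      have hjk : j < k := Finset.mem_range.1 hj
      set x := (N μ ^ j) (c μ) with hx
      have hb : Tendsto (fun m : ℕ => ((m.choose j : ℝ) / (m.choose k : ℝ)) * ‖x‖) atTop
          (𝓝 0) := by
        simpa using (auxRatioTendsto hjk).mul_const ‖x‖
      refine squeeze_zero_norm (fun m => ?_) hb
      rw [norm_smul, norm_mul, norm_pow, heig1 μ hμ, one_pow, mul_one, norm_div]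
      simp
    simpa using h0
  have hdiff : Tendsto (fun m => seq m - a (m - k)) atTop (𝓝 0) := by
    refine herr.congr' ?_
    filter_upwards [eventually_ge_atTop k] with m hm
    exact (hkey m hm).symm
  have hdiff' : Tendsto (fun m => a (m - k) - seq m) atTop (𝓝 0) := by
    have := hdiff.neg
    rw [neg_zero] at this
    exact this.congr fun m => by rw [neg_sub]
  have hstruct : ∀ p : V, MapClusterPt p atTop seq →
      ∃ c' : ℂ → ℂ, (∀ μ ∈ S, ‖c' μ‖ = 1) ∧ p = ∑ μ ∈ S, c' μ • w μ := by
    intro p hp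
    have hA : MapClusterPt p atTop (fun m => a (m - k)) := auxClusterCongr hdiff hp
    have hA2 : MapClusterPt p (map (fun m => m - k) atTop) a := mapClusterPt_comp.1 hA
    rw [map_sub_atTop_eq_nat] at hA2
    exact auxClusterStructure S heig1 w hA2
  have hin : ∀ p : V, MapClusterPt p atTop seq → p ∈ (Eve : Set V) \ {0} := by
    intro p hp
    obtain ⟨c', hc'1, hc'2⟩ := hstruct p hp
    constructor
    · rw [hEve, hc'2]
      refine Submodule.sum_mem _ fun μ hμ => ?_
      by_cases hwμ : w μ = 0
      · rw [hwμ, smul_zero]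
        exact Submodule.zero_mem _
      · exact Submodule.smul_mem _ _ (Submodule.subset_span
          ⟨μ, Module.End.mem_eigenspace_iff.2 (hw_eig μ hμ), hwμ⟩)
    · simp only [Set.mem_singleton_iff]
      intro hp0
      rw [hp0] at hc'2
      set S' := S.filter (fun μ => w μ ≠ 0) with hS'
      have hsumS' : ∑ μ ∈ S', c' μ • w μ = 0 := by
        rw [hS', Finset.sum_filter_of_ne, ← hc'2]
        intro μ hμ hne hwz
        exact hne (by rw [hwz, smul_zero])
      have hμ0' : μ0 ∈ S' := Finset.mem_filter.2 ⟨hμ0S, hw0⟩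
      have hli : LinearIndependent ℂ (fun μ : S' => w μ) := by
        refine Module.End.eigenvectors_linearIndependent' (T : Module.End ℂ V)
          (fun μ : S' => (μ : ℂ)) Subtype.coe_injective _ fun μ => ?_
        have hμS : (μ : ℂ) ∈ S := (Finset.mem_filter.1 μ.2).1
        exact ⟨Module.End.mem_eigenspace_iff.2 (hw_eig μ hμS), (Finset.mem_filter.1 μ.2).2⟩
      have hzero := Fintype.linearIndependent_iff.1 hli (fun μ : S' => c' μ) ?_ ⟨μ0, hμ0'⟩
      · have := hc'1 μ0 hμ0S
        rw [hzero] at this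
        simp at this
      · rw [← hsumS', ← Finset.sum_coe_sort S' (fun μ => c' μ • w μ)]
  -- existence of a cluster point
  have haB : ∀ t, ‖a t‖ ≤ ∑ μ ∈ S, ‖w μ‖ := by
    intro t
    refine (norm_sum_le _ _).trans (Finset.sum_le_sum fun μ hμ => ?_)
    rw [norm_smul, norm_pow, heig1 μ hμ, one_pow, one_mul]
  have hbdd : ∀ᶠ m in atTop, ‖seq m‖ ≤ (∑ μ ∈ S, ‖w μ‖) + 1 := by
    have h1 : ∀ᶠ m in atTop, ‖seq m - a (m - k)‖ < 1 := by
      have := hdiff.eventually (Metric.ball_mem_nhds (0 : V) one_pos)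
      simpa [Metric.mem_ball, dist_eq_norm] using this
    filter_upwards [h1] with m hm
    calc ‖seq m‖ ≤ ‖seq m - a (m - k)‖ + ‖a (m - k)‖ := by
          simpa using norm_add_le (seq m - a (m - k)) (a (m - k))
      _ ≤ (∑ μ ∈ S, ‖w μ‖) + 1 := by
          have := haB (m - k)
          linarith
  obtain ⟨p, hp⟩ := auxExistsCluster hbdd
  -- relation between normalizations
  have hrel : ∀ (k₁ : ℕ) (m : ℕ), k ≤ m → ((m.choose k₁ : ℂ))⁻¹ • (T ^ m) v
      = (((m.choose k : ℂ)) / ((m.choose k₁ : ℂ))) • seq m := by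
    intro k₁ m hm
    show _ = _ • ((m.choose k : ℂ))⁻¹ • (T ^ m) v
    rw [smul_smul]
    congr 1
    have hk0 : ((m.choose k : ℂ)) ≠ 0 := Nat.cast_ne_zero.2 (Nat.choose_pos hm).ne'
    by_cases h : ((m.choose k₁ : ℂ)) = 0
    · rw [h]
      simp
    · field_simp
  have hreln : ∀ (k₁ : ℕ) (m : ℕ), k ≤ m → ‖((m.choose k₁ : ℂ))⁻¹ • (T ^ m) v‖
      = ((m.choose k : ℝ) / (m.choose k₁ : ℝ)) * ‖seq m‖ := by
    intro k₁ m hm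
    rw [hrel k₁ m hm, norm_smul, norm_div]
    norm_num
  refine ⟨k, ⟨⟨p, hp⟩, fun q hq => hin q hq⟩, ?_⟩
  rintro k₁ ⟨⟨q, hq⟩, hsub₁⟩
  rcases Nat.lt_trichotomy k₁ k with hlt | heq | hgt
  · -- k₁ < k : no cluster points, contradiction with nonemptiness
    exfalso
    have h0 : ¬ MapClusterPt (0 : V) atTop seq := fun h => (hin 0 h).2 rfl
    rw [mapClusterPt_iff_frequently] at h0
    push_neg at h0
    obtain ⟨s, hs, hev⟩ := h0
    obtain ⟨ε, hε, hball⟩ := Metric.mem_nhds_iff.1 hs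
    have hlow : ∀ᶠ m in atTop, ε ≤ ‖seq m‖ := by
      filter_upwards [hev] with m hm
      by_contra hcon
      push_neg at hcon
      exact hm (hball (by simpa [Metric.mem_ball, dist_zero_right] using hcon))
    have htop' : Tendsto (fun m : ℕ => (m.choose k : ℝ) / (m.choose k₁ : ℝ)) atTop atTop := by
      have h1 : Tendsto (fun m : ℕ => (m.choose k₁ : ℝ) / (m.choose k : ℝ)) atTop (𝓝[>] 0) := by
        rw [tendsto_nhdsWithin_iff]
        refine ⟨auxRatioTendsto hlt, ?_⟩
        filter_upwards [eventually_ge_atTop k] with m hm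
        have h2 : 0 < m.choose k₁ := Nat.choose_pos (by omega)
        have h3 : 0 < m.choose k := Nat.choose_pos hm
        exact Set.mem_Ioi.2 (div_pos (by exact_mod_cast h2) (by exact_mod_cast h3))
      have h2 := h1.inv_tendsto_nhdsGT_zero
      refine h2.congr fun m => ?_
      simp [Pi.inv_apply, inv_div]
    have hnt : Tendsto (fun m => ‖((m.choose k₁ : ℂ))⁻¹ • (T ^ m) v‖) atTop atTop := by
      refine tendsto_atTop_mono' atTop ?_ (htop'.atTop_mul_const hε)
      filter_upwards [hlow, eventually_ge_atTop k] with m h1 h2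
      rw [hreln k₁ m h2]
      have hr0 : (0 : ℝ) ≤ (m.choose k : ℝ) / (m.choose k₁ : ℝ) := by positivity
      exact mul_le_mul_of_nonneg_left h1 hr0
    have hfreq : ∃ᶠ m in atTop, dist (((m.choose k₁ : ℂ))⁻¹ • (T ^ m) v) q < 1 := by
      have := mapClusterPt_iff_frequently.1 hq _ (Metric.ball_mem_nhds q one_pos)
      simpa [Metric.mem_ball] using this
    have hev2 : ∀ᶠ m in atTop, ‖q‖ + 1 ≤ ‖((m.choose k₁ : ℂ))⁻¹ • (T ^ m) v‖ :=
      hnt.eventually_ge_atTop _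
    rcases (hfreq.and_eventually hev2).exists with ⟨m, h1, h2⟩
    rw [dist_eq_norm] at h1
    have h3 : ‖((m.choose k₁ : ℂ))⁻¹ • (T ^ m) v‖
        ≤ ‖((m.choose k₁ : ℂ))⁻¹ • (T ^ m) v - q‖ + ‖q‖ := by
      simpa using norm_add_le (((m.choose k₁ : ℂ))⁻¹ • (T ^ m) v - q) q
    linarith
  · exact heq
  · -- k < k₁ : sequence tends to zero, so 0 is a cluster point, contradiction
    exfalso
    have hto0 : Tendsto (fun m : ℕ => ((m.choose k₁ : ℂ))⁻¹ • (T ^ m) v) atTop (𝓝 0) := by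
      apply squeeze_zero_norm'
          (a := fun m : ℕ => ((m.choose k : ℝ) / (m.choose k₁ : ℝ)) * ((∑ μ ∈ S, ‖w μ‖) + 1))
      · filter_upwards [hbdd, eventually_ge_atTop k] with m h1 h2
        rw [hreln k₁ m h2]
        have hr0 : (0 : ℝ) ≤ (m.choose k : ℝ) / (m.choose k₁ : ℝ) := by positivity
        exact mul_le_mul_of_nonneg_left h1 hr0
      · simpa using (auxRatioTendsto hgt).mul_const ((∑ μ ∈ S, ‖w μ‖) + 1)
    have h0mem : MapClusterPt (0 : V) atTop
        (fun m : ℕ => ((m.choose k₁ : ℂ))⁻¹ • (T ^ m) v) := hto0.mapClusterPt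
    exact (hsub₁ h0mem).2 rfl
end

section
/- Let Γ ≤ PSL(n+1,ℂ) be a Schottky group with F_k(Γ) = { γ(f) : f ∈ F(Γ), γ a reduced word of length at most k }. Then F(Γ) ⊂ Int(F_1(Γ)), the sets F_k(Γ) are increasing, and Ω(Γ) = ∪_{k≥0} Int(F_k(Γ)). -/
open Projectivization Matrix Filter Pointwise
open scoped LinearAlgebra.Projectivization

noncomputable section

/-- Complex projective space `ℙ^{N-1}_ℂ`, as the projectivization of `ℂ^N`. -/
abbrev PV (N : ℕ) := ℙ ℂ (Fin N → ℂ)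

instance (N : ℕ) : TopologicalSpace (PV N) :=
  inferInstanceAs (TopologicalSpace (Quotient _))

/-- The action of `SL(N, ℂ)` on projective space. -/
instance (N : ℕ) : SMul (SpecialLinearGroup (Fin N) ℂ) (PV N) :=
  ⟨fun A => Projectivization.map (SpecialLinearGroup.toLin' A).toLinearMap
      (SpecialLinearGroup.toLin' A).injective⟩

theorem SL_smul_mk {N : ℕ} (A : SpecialLinearGroup (Fin N) ℂ) (v : Fin N → ℂ) (hv : v ≠ 0) :
    A • Projectivization.mk ℂ v hv =
      Projectivization.mk ℂ (SpecialLinearGroup.toLin' A v)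
        (by simpa using (SpecialLinearGroup.toLin' A).map_ne_zero_iff.mpr hv) :=
  Projectivization.map_mk _ _ v hv

instance (N : ℕ) : MulAction (SpecialLinearGroup (Fin N) ℂ) (PV N) where
  one_smul x := by
    induction x using Projectivization.ind with
    | h v hv => rw [SL_smul_mk]; simp
  mul_smul A B x := by
    induction x using Projectivization.ind with
    | h v hv =>
      rw [SL_smul_mk, SL_smul_mk, SL_smul_mk]
      simp only [_root_.map_mul]
      rfl

theorem center_smul_eq {N : ℕ} {C : SpecialLinearGroup (Fin N) ℂ}
    (hC : C ∈ Subgroup.center (SpecialLinearGroup (Fin N) ℂ)) (x : PV N) : C • x = x := by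
  obtain ⟨r, hrN, hr⟩ := Matrix.SpecialLinearGroup.mem_center_iff.mp hC
  induction x using Projectivization.ind with
  | h v hv =>
    rcases Nat.eq_zero_or_pos N with hN | hN
    · subst hN
      exact absurd (Subsingleton.elim v 0) hv
    have hr0 : r ≠ 0 := by
      intro h0
      rw [h0, zero_pow (by simpa using hN.ne')] at hrN
      exact zero_ne_one hrN
    rw [SL_smul_mk]
    symm
    rw [Projectivization.mk_eq_mk_iff']
    refine ⟨r⁻¹, ?_⟩
    have hCv : SpecialLinearGroup.toLin' C v = r • v := by
      rw [SpecialLinearGroup.toLin'_apply, Matrix.toLin'_apply, ← hr]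
      ext i
      simp [Matrix.mulVec, dotProduct, Matrix.scalar_apply, Matrix.diagonal,
        Finset.sum_ite_eq]
    rw [hCv, smul_smul, inv_mul_cancel₀ hr0, one_smul]

/-- The projective special linear group `PSL(N, ℂ)`. -/
abbrev PSL (N : ℕ) :=
  SpecialLinearGroup (Fin N) ℂ ⧸ Subgroup.center (SpecialLinearGroup (Fin N) ℂ)

instance (N : ℕ) : SMul (PSL N) (PV N) :=
  ⟨fun g x => Quotient.liftOn' g (fun A => A • x) (by
    intro A B h
    rw [QuotientGroup.leftRel_apply] at h
    have hB : B = A * (A⁻¹ * B) := by group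
    rw [hB, mul_smul, center_smul_eq h])⟩

theorem PSL_mk_smul {N : ℕ} (A : SpecialLinearGroup (Fin N) ℂ) (x : PV N) :
    (QuotientGroup.mk A : PSL N) • x = A • x := rfl

instance (N : ℕ) : MulAction (PSL N) (PV N) where
  one_smul x := by
    rw [show (1 : PSL N) = QuotientGroup.mk 1 from rfl, PSL_mk_smul, one_smul]
  mul_smul g h x := by
    induction g using QuotientGroup.induction_on with
    | H A =>
      induction h using QuotientGroup.induction_on with
      | H B =>
        rw [show (QuotientGroup.mk A * QuotientGroup.mk B : PSL N) = QuotientGroup.mk (A * B)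
          from rfl, PSL_mk_smul, PSL_mk_smul, PSL_mk_smul, mul_smul]

/-- The data of a Schottky group in `PSL(N, ℂ)` acting on `ℙ^{N-1}_ℂ`:
`2g` open sets (`g ≥ 2`), each equal to the interior of its closure, with pairwise
disjoint closures, together with `g` generators `γ_j` satisfying
`γ_j (R_j) = ℙ^{N-1}_ℂ \ closure (S_j)`. -/
structure SchottkyData (N g : ℕ) where
  hg : 2 ≤ g
  R : Fin g → Set (PV N)
  S : Fin g → Set (PV N)
  gen : Fin g → PSL N
  Ropen : ∀ j, IsOpen (R j)
  Sopen : ∀ j, IsOpen (S j)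
  Rreg : ∀ j, interior (closure (R j)) = R j
  Sreg : ∀ j, interior (closure (S j)) = S j
  disj : Pairwise (Function.onFun Disjoint
    (Sum.elim (fun j => closure (R j)) (fun j => closure (S j)) : Fin g ⊕ Fin g → Set (PV N)))
  pair : ∀ j, gen j • R j = (closure (S j))ᶜ

namespace SchottkyData

variable {N g : ℕ}

/-- The Schottky group itself: the subgroup generated by the Schottky generators. -/
def Γ (D : SchottkyData N g) : Subgroup (PSL N) := Subgroup.closure (Set.range D.gen)

/-- The fundamental region `F(Γ) = ℙ^{N-1}_ℂ \ ⋃ⱼ (Rⱼ ∪ Sⱼ)`. -/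
def F (D : SchottkyData N g) : Set (PV N) := (⋃ j, D.R j ∪ D.S j)ᶜ

/-- The region `Ω(Γ) = ⋃_{γ ∈ Γ} γ (F(Γ))`. -/
def Ω (D : SchottkyData N g) : Set (PV N) := ⋃ γ ∈ D.Γ, γ • D.F

end SchottkyData
/-! ### Auxiliary lemmas -/

section Aux

open scoped Classical

theorem continuous_PSL_smul {N : ℕ} (γ : PSL N) : Continuous (fun x : PV N => γ • x) := by
  induction γ using QuotientGroup.induction_on with
  | H A =>
    have : (fun x : PV N => (QuotientGroup.mk A : PSL N) • x) =
        Projectivization.map (SpecialLinearGroup.toLin' A).toLinearMap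
          (SpecialLinearGroup.toLin' A).injective := rfl
    rw [this]
    apply Continuous.quotient_map'
    exact Continuous.subtype_mk
      (((SpecialLinearGroup.toLin' A).toLinearMap.continuous_of_finiteDimensional).comp
        continuous_subtype_val) _

instance (N : ℕ) : ContinuousConstSMul (PSL N) (PV N) :=
  ⟨fun γ => continuous_PSL_smul γ⟩

namespace SchottkyData

variable {N g : ℕ} (D : SchottkyData N g)

theorem gen_smul_closure_R (j : Fin g) :
    D.gen j • closure (D.R j) = (D.S j)ᶜ := by
  rw [← closure_smul, D.pair, closure_compl, D.Sreg]

theorem gen_smul_compl_R (j : Fin g) :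
    D.gen j • (D.R j)ᶜ = closure (D.S j) := by
  rw [Set.smul_set_compl, D.pair, compl_compl]

/-- The symmetric Schottky data: swap the roles of `R` and `S` and invert generators. -/
def symm : SchottkyData N g where
  hg := D.hg
  R := D.S
  S := D.R
  gen := fun j => (D.gen j)⁻¹
  Ropen := D.Sopen
  Sopen := D.Ropen
  Rreg := D.Sreg
  Sreg := D.Rreg
  disj := by
    intro i k hik
    have h2 : Sum.swap i ≠ Sum.swap k := fun h => hik (by
      have := congrArg Sum.swap h
      simpa using this)
    have := D.disj h2
    cases i <;> cases k <;> exact this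
  pair := by
    intro j
    have h := D.gen_smul_closure_R j
    have h2 : D.gen j • (closure (D.R j))ᶜ = D.S j := by
      rw [Set.smul_set_compl, h, compl_compl]
    calc (D.gen j)⁻¹ • D.S j = (D.gen j)⁻¹ • D.gen j • (closure (D.R j))ᶜ := by rw [h2]
      _ = (closure (D.R j))ᶜ := inv_smul_smul _ _

theorem symm_F : D.symm.F = D.F := by
  simp only [F]
  congr 1
  exact Set.iUnion_congr fun j => Set.union_comm _ _

/-- The key neighborhood lemma: a point of `F` on the boundary of `S j` has a neighborhood
contained in `F ∪ γ_j F`. -/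
theorem nbhd_S {x : PV N} (j : Fin g) (hx : x ∈ D.F) (hxS : x ∈ closure (D.S j)) :
    ∃ U : Set (PV N), IsOpen U ∧ x ∈ U ∧ U ⊆ D.F ∪ D.gen j • D.F := by
  set T : Fin g ⊕ Fin g → Set (PV N) :=
    Sum.elim (fun i => closure (D.R i)) (fun i => closure (D.S i)) with hT
  have hTclosed : ∀ i, IsClosed (T i) := by rintro (i | i) <;> exact isClosed_closure
  have hxF : ∀ i, x ∉ D.R i ∧ x ∉ D.S i := by
    intro i
    constructor <;> intro h <;> exact hx (Set.mem_iUnion.mpr ⟨i, by simp [h]⟩)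
  -- V' : neighborhood of x avoiding all closures except `closure (S j)`
  set V' : Set (PV N) := (⋃ i ∈ {i | i ≠ Sum.inr j}, T i)ᶜ with hV'
  have hV'open : IsOpen V' :=
    (Set.Finite.isClosed_biUnion (Set.toFinite _) (fun i _ => hTclosed i)).isOpen_compl
  have hxV' : x ∈ V' := by
    intro hmem
    obtain ⟨i, hi, hxi⟩ := Set.mem_iUnion₂.mp hmem
    exact Set.disjoint_left.mp (D.disj hi) hxi hxS
  -- V : neighborhood of γ_j⁻¹ x avoiding all closures except `closure (R j)`
  set V : Set (PV N) := (⋃ i ∈ {i | i ≠ Sum.inl j}, T i)ᶜ with hV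
  have hVopen : IsOpen V :=
    (Set.Finite.isClosed_biUnion (Set.toFinite _) (fun i _ => hTclosed i)).isOpen_compl
  have hwR : (D.gen j)⁻¹ • x ∈ closure (D.R j) := by
    have hxS' : x ∈ (D.S j)ᶜ := (hxF j).2
    rw [← D.gen_smul_closure_R j] at hxS'
    exact Set.mem_smul_set_iff_inv_smul_mem.mp hxS'
  have hwV : (D.gen j)⁻¹ • x ∈ V := by
    intro hmem
    obtain ⟨i, hi, hxi⟩ := Set.mem_iUnion₂.mp hmem
    exact Set.disjoint_left.mp (D.disj hi) hxi hwR
  refine ⟨V' ∩ D.gen j • V, hV'open.inter (hVopen.smul _), ⟨hxV', ?_⟩, ?_⟩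
  · exact Set.mem_smul_set_iff_inv_smul_mem.mpr hwV
  · rintro y ⟨hyV', hyV⟩
    by_cases hyS : y ∈ closure (D.S j)
    · -- y ∈ closure (S j) : then γ_j⁻¹ y ∈ F
      right
      set w := (D.gen j)⁻¹ • y with hw
      have hwVmem : w ∈ V := Set.mem_smul_set_iff_inv_smul_mem.mp hyV
      have hwRc : w ∉ D.R j := by
        intro hmem
        rw [← D.gen_smul_compl_R j] at hyS
        exact Set.mem_smul_set_iff_inv_smul_mem.mp hyS hmem
      have hwF : w ∈ D.F := by
        intro hmem
        obtain ⟨i, hi⟩ := Set.mem_iUnion.mp hmem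
        rcases hi with hi | hi
        · by_cases hij : i = j
          · exact hwRc (hij ▸ hi)
          · exact hwVmem (Set.mem_iUnion₂.mpr ⟨Sum.inl i, by simpa using hij,
              subset_closure hi⟩)
        · exact hwVmem (Set.mem_iUnion₂.mpr ⟨Sum.inr i, by simp, subset_closure hi⟩)
      exact Set.mem_smul_set_iff_inv_smul_mem.mpr hwF
    · -- y ∉ closure (S j) : then y ∈ F
      left
      intro hmem
      obtain ⟨i, hi⟩ := Set.mem_iUnion.mp hmem
      rcases hi with hi | hi
      · exact hyV' (Set.mem_iUnion₂.mpr ⟨Sum.inl i, by simp, subset_closure hi⟩)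
      · by_cases hij : i = j
        · exact hyS (hij ▸ subset_closure hi)
        · exact hyV' (Set.mem_iUnion₂.mpr ⟨Sum.inr i, by simpa using hij,
            subset_closure hi⟩)

theorem nbhd_R {x : PV N} (j : Fin g) (hx : x ∈ D.F) (hxR : x ∈ closure (D.R j)) :
    ∃ U : Set (PV N), IsOpen U ∧ x ∈ U ∧ U ⊆ D.F ∪ (D.gen j)⁻¹ • D.F := by
  have := D.symm.nbhd_S j (by rwa [D.symm_F]) hxR
  rwa [D.symm_F] at this

/-- Every element of the Schottky group is a product of a list of generators and inverses. -/
theorem exists_word {γ : PSL N} (hγ : γ ∈ D.Γ) :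
    ∃ L : List (PSL N), (∀ a ∈ L, ∃ j, a = D.gen j ∨ a = (D.gen j)⁻¹) ∧ L.prod = γ := by
  refine Subgroup.closure_induction (fun x hx => ?_) ?_ (fun x y _ _ ihx ihy => ?_)
    (fun x _ ihx => ?_) hγ
  · obtain ⟨j, rfl⟩ := hx
    refine ⟨[D.gen j], ?_, by simp⟩
    intro a ha
    rw [List.mem_singleton] at ha
    exact ⟨j, Or.inl ha⟩
  · exact ⟨[], by simp, by simp⟩
  · obtain ⟨L₁, hL₁, hp₁⟩ := ihx
    obtain ⟨L₂, hL₂, hp₂⟩ := ihy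
    refine ⟨L₁ ++ L₂, ?_, by rw [List.prod_append, hp₁, hp₂]⟩
    intro a ha
    rcases List.mem_append.mp ha with h | h
    · exact hL₁ a h
    · exact hL₂ a h
  · obtain ⟨L, hL, hp⟩ := ihx
    refine ⟨(L.map (·⁻¹)).reverse, ?_, ?_⟩
    · intro a ha
      rw [List.mem_reverse, List.mem_map] at ha
      obtain ⟨b, hb, rfl⟩ := ha
      obtain ⟨j, hj | hj⟩ := hL b hb
      · exact ⟨j, Or.inr (by rw [hj])⟩
      · exact ⟨j, Or.inl (by rw [hj, inv_inv])⟩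
    · rw [← hp, List.prod_inv_reverse]

end SchottkyData

end Aux

/-- With `F_k(Γ) = { γ(f) : f ∈ F(Γ), γ a word of length at most k in the generators }`,
one has `F(Γ) ⊆ Int (F_1(Γ))`, the `F_k(Γ)` are increasing, and
`Ω(Γ) = ⋃_{k ≥ 0} Int (F_k(Γ))`. -/
theorem schottky_exhaustion (n g : ℕ) (D : SchottkyData (n + 1) g)
    (Fk : ℕ → Set (PV (n + 1)))
    (hFk : ∀ k : ℕ, Fk k = {y : PV (n + 1) | ∃ l : ℕ, l ≤ k ∧
      ∃ (z : Fin l → Fin g) (ε : Fin l → ℤ), (∀ i, ε i = 1 ∨ ε i = -1) ∧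
        y ∈ (List.ofFn fun i => D.gen (z i) ^ ε i).prod • D.F}) :
    D.F ⊆ interior (Fk 1) ∧ Monotone Fk ∧ D.Ω = ⋃ k : ℕ, interior (Fk k) := by
  classical
  -- Reformulate membership in `Fk k` in terms of lists of generators and inverses.
  have mem_Fk : ∀ (k : ℕ) (y : PV (n + 1)), y ∈ Fk k ↔ ∃ L : List (PSL (n + 1)),
      L.length ≤ k ∧ (∀ a ∈ L, ∃ j, a = D.gen j ∨ a = (D.gen j)⁻¹) ∧ y ∈ L.prod • D.F := by
    intro k y
    rw [hFk]
    constructor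
    · rintro ⟨l, hl, z, ε, hε, hy⟩
      refine ⟨List.ofFn fun i => D.gen (z i) ^ ε i, by simpa using hl, ?_, hy⟩
      intro a ha
      rw [List.mem_ofFn] at ha
      obtain ⟨i, rfl⟩ := ha
      rcases hε i with h | h
      · exact ⟨z i, Or.inl (by show D.gen (z i) ^ ε i = _; rw [h, zpow_one])⟩
      · exact ⟨z i, Or.inr (by show D.gen (z i) ^ ε i = _; rw [h, _root_.zpow_neg_one])⟩
    · rintro ⟨L, hlen, hL, hy⟩
      choose z hz using fun i : Fin L.length => hL (L.get i) (List.get_mem L i)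
      refine ⟨L.length, hlen, z,
        fun i => if L.get i = D.gen (z i) then 1 else -1, fun i => by dsimp only; split <;> simp,
        ?_⟩
      have hfn : (List.ofFn fun i =>
          D.gen (z i) ^ (if L.get i = D.gen (z i) then (1 : ℤ) else -1)) = L := by
        conv_rhs => rw [← List.ofFn_get L]
        congr 1
        funext i
        by_cases h : L.get i = D.gen (z i)
        · rw [if_pos h, zpow_one, h]
        · rcases hz i with h' | h'
          · exact absurd h' h
          · rw [if_neg h, _root_.zpow_neg_one, ← h']
      rw [hfn]
      exact hy
  have hF_sub : ∀ k, D.F ⊆ Fk k := by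
    intro k y hy
    rw [mem_Fk]
    exact ⟨[], by simp, by simp, by simpa using hy⟩
  have hgen_sub : ∀ (j : Fin g) (e : ℤ), e = 1 ∨ e = -1 → (D.gen j ^ e) • D.F ⊆ Fk 1 := by
    intro j e he y hy
    rw [mem_Fk]
    refine ⟨[D.gen j ^ e], by simp, ?_, by simpa using hy⟩
    intro a ha
    rw [List.mem_singleton] at ha
    subst ha
    rcases he with rfl | rfl
    · exact ⟨j, Or.inl (zpow_one _)⟩
    · exact ⟨j, Or.inr (_root_.zpow_neg_one _)⟩
  have part1 : D.F ⊆ interior (Fk 1) := by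
    intro x hx
    rw [mem_interior]
    by_cases hcl : ∃ j, x ∈ closure (D.R j) ∨ x ∈ closure (D.S j)
    · obtain ⟨j, hj | hj⟩ := hcl
      · obtain ⟨U, hUo, hxU, hUsub⟩ := D.nbhd_R j hx hj
        refine ⟨U, hUsub.trans (Set.union_subset (hF_sub 1) ?_), hUo, hxU⟩
        have := hgen_sub j (-1) (Or.inr rfl)
        rwa [_root_.zpow_neg_one] at this
      · obtain ⟨U, hUo, hxU, hUsub⟩ := D.nbhd_S j hx hj
        refine ⟨U, hUsub.trans (Set.union_subset (hF_sub 1) ?_), hUo, hxU⟩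
        have := hgen_sub j 1 (Or.inl rfl)
        rwa [zpow_one] at this
    · push_neg at hcl
      refine ⟨(⋃ j, closure (D.R j) ∪ closure (D.S j))ᶜ, ?_, ?_, ?_⟩
      · intro y hy
        apply hF_sub 1
        intro hmem
        obtain ⟨i, hi⟩ := Set.mem_iUnion.mp hmem
        refine hy (Set.mem_iUnion.mpr ⟨i, ?_⟩)
        rcases hi with h | h
        · exact Or.inl (subset_closure h)
        · exact Or.inr (subset_closure h)
      · exact (isClosed_iUnion_of_finite fun j =>
          isClosed_closure.union isClosed_closure).isOpen_compl
      · intro hmem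
        obtain ⟨i, hi⟩ := Set.mem_iUnion.mp hmem
        rcases hi with h | h
        · exact (hcl i).1 h
        · exact (hcl i).2 h
  have part2 : Monotone Fk := by
    intro a b hab y hy
    obtain ⟨L, h1, h2, h3⟩ := (mem_Fk a y).mp hy
    exact (mem_Fk b y).mpr ⟨L, h1.trans hab, h2, h3⟩
  have smul_mem : ∀ L : List (PSL (n + 1)), (∀ a ∈ L, ∃ j, a = D.gen j ∨ a = (D.gen j)⁻¹) →
      ∀ m (y : PV (n + 1)), y ∈ Fk m → L.prod • y ∈ Fk (L.length + m) := by
    intro L hL m y hy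
    obtain ⟨L', h1, h2, h3⟩ := (mem_Fk m y).mp hy
    refine (mem_Fk _ _).mpr ⟨L ++ L', by simpa using Nat.add_le_add_left h1 L.length, ?_, ?_⟩
    · intro a ha
      rcases List.mem_append.mp ha with h | h
      · exact hL a h
      · exact h2 a h
    · rw [List.prod_append, mul_smul]
      exact Set.smul_mem_smul_set h3
  refine ⟨part1, part2, ?_⟩
  apply Set.Subset.antisymm
  · intro y hy
    simp only [SchottkyData.Ω] at hy
    obtain ⟨γ, hγ, hyγ⟩ := Set.mem_iUnion₂.mp hy
    obtain ⟨L, hL, hprod⟩ := D.exists_word hγ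
    refine Set.mem_iUnion.mpr ⟨L.length + 1, ?_⟩
    have h1 : γ • D.F ⊆ γ • interior (Fk 1) := Set.smul_set_mono part1
    have h2 : γ • interior (Fk 1) = interior (γ • Fk 1) := (interior_smul γ (Fk 1)).symm
    have h3 : γ • Fk 1 ⊆ Fk (L.length + 1) := by
      rintro w ⟨v, hv, rfl⟩
      rw [← hprod]
      exact smul_mem L hL 1 v hv
    exact interior_mono h3 (h2 ▸ h1 hyγ)
  · refine Set.iUnion_subset fun k => interior_subset.trans ?_
    intro y hy
    obtain ⟨L, _, hL, hy⟩ := (mem_Fk k y).mp hy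
    have hprod : L.prod ∈ D.Γ := by
      apply Subgroup.list_prod_mem
      intro a ha
      obtain ⟨j, hj | hj⟩ := hL a ha
      · exact hj ▸ Subgroup.subset_closure ⟨j, rfl⟩
      · exact hj ▸ Subgroup.inv_mem _ (Subgroup.subset_closure ⟨j, rfl⟩)
    simp only [SchottkyData.Ω]
    exact Set.mem_biUnion hprod hy
end
end

section
/- For the Jordan block T of size n with unitary eigenvalue λ (|λ| = 1), the normalized powers satisfy: for v = Σ α_j v_j with k = max{j : α_j ≠ 0} − 1, the first coordinate of C(m,k)^{-1} T^m(v) stays bounded away from 0 and all other coordinates tend to 0 relative to it; in particular the sequence [C(m,k)^{-1} T^m(v)] in projective space converges to the point [v_1]. -/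
open Filter
open scoped LinearAlgebra.Projectivization

noncomputable instance {n : ℕ} : TopologicalSpace (ℙ ℂ (Fin n → ℂ)) :=
  inferInstanceAs (TopologicalSpace (Quotient _))

/-- Pascal-type step for the Jordan block sum formula. -/
lemma jordan_gstep (n m j : ℕ) (lam : ℂ) (V : ℕ → ℂ) (hV : ∀ t, n ≤ t → V t = 0) :
    lam * (∑ r ∈ Finset.range n, (m.choose r : ℂ) * lam ^ (m - r) * V (j + r))
      + (∑ r ∈ Finset.range n, (m.choose r : ℂ) * lam ^ (m - r) * V (j + 1 + r))
    = ∑ r ∈ Finset.range n, ((m + 1).choose r : ℂ) * lam ^ (m + 1 - r) * V (j + r) := by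
  set F : ℕ → ℂ := fun s =>
    (if s = 0 then 0 else ((m.choose (s - 1) : ℂ) * lam ^ (m - (s - 1)))) * V (j + s) with hF
  have h2 : (∑ r ∈ Finset.range n, (m.choose r : ℂ) * lam ^ (m - r) * V (j + 1 + r))
      = ∑ s ∈ Finset.range n, F s := by
    have e1 : ∀ r : ℕ, (m.choose r : ℂ) * lam ^ (m - r) * V (j + 1 + r) = F (r + 1) := by
      intro r
      simp only [hF, Nat.add_sub_cancel, if_neg (Nat.succ_ne_zero r),
        show j + (r + 1) = j + 1 + r from by omega]
    calc (∑ r ∈ Finset.range n, (m.choose r : ℂ) * lam ^ (m - r) * V (j + 1 + r))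
        = ∑ r ∈ Finset.range n, F (r + 1) := Finset.sum_congr rfl fun r _ => e1 r
      _ = (∑ s ∈ Finset.range (n + 1), F s) - F 0 := by
          rw [Finset.sum_range_succ']; ring
      _ = ∑ s ∈ Finset.range (n + 1), F s := by simp [hF]
      _ = (∑ s ∈ Finset.range n, F s) + F n := Finset.sum_range_succ F n
      _ = ∑ s ∈ Finset.range n, F s := by
          have : V (j + n) = 0 := hV _ (by omega)
          simp [hF, this]
  rw [Finset.mul_sum, h2, ← Finset.sum_add_distrib]
  refine Finset.sum_congr rfl fun r _ => ?_
  rcases r with _ | t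
  · simp only [hF, reduceIte, Nat.choose_zero_right, Nat.sub_zero, Nat.cast_one, zero_mul,
      add_zero, pow_succ, one_mul]
    ring
  · simp only [hF, if_neg (Nat.succ_ne_zero t), Nat.add_sub_cancel]
    have hps : (((m + 1).choose (t + 1) : ℂ)) = m.choose t + m.choose (t + 1) := by
      exact_mod_cast Nat.choose_succ_succ' m t
    have he : m + 1 - (t + 1) = m - t := by omega
    rw [he, hps]
    rcases lt_or_ge t m with h | h
    · have h1 : lam ^ (m - t) = lam * lam ^ (m - (t + 1)) := by
        rw [← pow_succ']
        congr 1
        omega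
      rw [h1]; ring
    · have h0 : m.choose (t + 1) = 0 := Nat.choose_eq_zero_of_lt (by omega)
      rw [h0]
      push_cast
      ring

lemma choose_ratio_tendsto_zero {r k : ℕ} (h : r < k) :
    Tendsto (fun m : ℕ => (m.choose r : ℝ) / (m.choose k : ℝ)) atTop (nhds 0) := by
  have h1 : Tendsto (fun m : ℕ => ((m : ℝ))⁻¹) atTop (nhds 0) :=
    tendsto_inv_atTop_zero.comp tendsto_natCast_atTop_atTop
  have h2 : Tendsto (fun m : ℕ => ((m : ℝ)⁻¹) ^ (k - r)) atTop (nhds 0) := by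
    have := h1.pow (k - r)
    simpa [zero_pow (by omega : k - r ≠ 0)] using this
  have hlim : Tendsto (fun m : ℕ => (k.factorial * 2 ^ k : ℝ) * ((m : ℝ)⁻¹) ^ (k - r))
      atTop (nhds 0) := by simpa using h2.const_mul (k.factorial * 2 ^ k : ℝ)
  refine tendsto_of_tendsto_of_tendsto_of_le_of_le' tendsto_const_nhds hlim ?_ ?_
  · filter_upwards with m; positivity
  · filter_upwards [eventually_ge_atTop (2 * k + 1)] with m hm
    have hm0 : (0 : ℝ) < m := by
      have : (0:ℕ) < m := by omega
      exact_mod_cast this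
    have hup : (m.choose r : ℝ) ≤ (m : ℝ) ^ r := by
      exact_mod_cast Nat.cast_le.mpr (Nat.choose_le_pow m r)
    have hlow : ((m : ℝ) / 2) ^ k / k.factorial ≤ (m.choose k : ℝ) := by
      refine le_trans ?_ (Nat.pow_le_choose k m)
      have hge : (m : ℝ) / 2 ≤ ((m + 1 - k : ℕ) : ℝ) := by
        have h1 : ((m + 1 - k : ℕ) : ℝ) = (m : ℝ) + 1 - k := by
          have hk : k ≤ m + 1 := by omega
          push_cast [hk]
          ring
        rw [h1]
        have h2 : (k : ℝ) ≤ (m : ℝ) / 2 := by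
          rw [le_div_iff₀ (by norm_num)]
          exact_mod_cast (by omega : k * 2 ≤ m)
        linarith
      gcongr
    have hposden : (0 : ℝ) < ((m : ℝ) / 2) ^ k / k.factorial := by positivity
    have hb : (m.choose r : ℝ) / (m.choose k : ℝ)
        ≤ (m : ℝ) ^ r / (((m : ℝ) / 2) ^ k / k.factorial) := by
      apply div_le_div₀ (by positivity) hup hposden hlow
    refine hb.trans (le_of_eq ?_)
    have hmk : (m : ℝ) ^ k = (m : ℝ) ^ r * (m : ℝ) ^ (k - r) := by
      rw [← pow_add]; congr 1; omega
    rw [inv_pow]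
    field_simp
    rw [← hmk, ← mul_pow]
    ring

/-- For the Jordan block `T` of size `n` with unitary eigenvalue `λ` (`|λ| = 1`), and
`v = Σ α_j v_j` with `k` the largest (0-based) index with `α_k ≠ 0`, the normalized powers
`u m = C(m,k)⁻¹ • Tᵐ v` satisfy: the first coordinate of `u m` stays bounded away from `0`,
every other coordinate tends to `0` relative to it, and the sequence `[Tᵐ v] = [C(m,k)⁻¹ Tᵐ v]`
in projective space converges to the point `[v_1]`. -/
theorem jordan_block_projective_convergence (n : ℕ) (hn : 0 < n) (lam : ℂ)
    (hlam : ‖lam‖ = 1) (T : Matrix (Fin n) (Fin n) ℂ)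
    (hT : ∀ i j : Fin n, T i j =
      if (j : ℕ) = (i : ℕ) then lam else if (j : ℕ) = (i : ℕ) + 1 then 1 else 0)
    (v : Fin n → ℂ) (k : Fin n) (hk : v k ≠ 0) (hmax : ∀ i : Fin n, k < i → v i = 0)
    (u : ℕ → Fin n → ℂ)
    (hu : ∀ m : ℕ, u m = ((m.choose (k : ℕ) : ℂ))⁻¹ • (T ^ m).mulVec v)
    (hpow : ∀ m : ℕ, (T ^ m).mulVec v ≠ 0) :
    (∃ c : ℝ, 0 < c ∧ ∀ᶠ m in atTop, c ≤ ‖u m ⟨0, hn⟩‖) ∧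
      (∀ i : Fin n, i ≠ ⟨0, hn⟩ →
        Tendsto (fun m : ℕ => ‖u m i‖ / ‖u m ⟨0, hn⟩‖) atTop (nhds 0)) ∧
      Tendsto (fun m : ℕ => Projectivization.mk ℂ ((T ^ m).mulVec v) (hpow m)) atTop
        (nhds (Projectivization.mk ℂ (Pi.single (⟨0, hn⟩ : Fin n) (1 : ℂ))
          (fun h => (one_ne_zero : (1 : ℂ) ≠ 0) (by simpa using congrFun h ⟨0, hn⟩)))) := by
  have hlamne : lam ≠ 0 := by
    intro h
    rw [h] at hlam
    simp at hlam
  have hvkpos : (0 : ℝ) < ‖v k‖ := norm_pos_iff.mpr hk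
  set V : ℕ → ℂ := fun j => if h : j < n then v ⟨j, h⟩ else 0 with hVdef
  have hVn : ∀ t, n ≤ t → V t = 0 := fun t ht => dif_neg (by omega)
  have hVgt : ∀ j, (k : ℕ) < j → V j = 0 := by
    intro j hj
    by_cases h : j < n
    · show (if h' : j < n then v ⟨j, h'⟩ else 0) = 0
      rw [dif_pos h]
      exact hmax ⟨j, h⟩ hj
    · exact hVn j (by omega)
  have hVk : V (k : ℕ) = v k := by
    show (if h' : (k : ℕ) < n then v ⟨(k : ℕ), h'⟩ else 0) = v k
    rw [dif_pos k.isLt]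
  -- the key formula for powers of the Jordan block
  have key : ∀ (m : ℕ) (i : Fin n), (T ^ m).mulVec v i =
      ∑ r ∈ Finset.range n, (m.choose r : ℂ) * lam ^ (m - r) * V ((i : ℕ) + r) := by
    intro m
    induction m with
    | zero =>
      intro i
      rw [pow_zero, Matrix.one_mulVec]
      have hsum : ∑ r ∈ Finset.range n, ((0 : ℕ).choose r : ℂ) * lam ^ (0 - r) * V ((i : ℕ) + r)
          = V (i : ℕ) := by
        rw [Finset.sum_eq_single 0]
        · simp
        · intro b _ hb
          rcases Nat.exists_eq_succ_of_ne_zero hb with ⟨t, rfl⟩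
          simp
        · intro hnot
          exact absurd (Finset.mem_range.mpr hn) hnot
      rw [hsum]
      show v i = if h : (i : ℕ) < n then v ⟨(i : ℕ), h⟩ else 0
      rw [dif_pos i.isLt]
    | succ m ih =>
      intro i
      have hTs : (T ^ (m + 1)).mulVec v = T.mulVec ((T ^ m).mulVec v) := by
        rw [pow_succ']
        rw [← Matrix.mulVec_mulVec]
      have hTij : ∀ j : Fin n, T i j =
          (if j = i then lam else 0) +
            (if h : (i : ℕ) + 1 < n then (if j = ⟨(i : ℕ) + 1, h⟩ then 1 else 0) else 0) := by
        intro j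
        rw [hT i j]
        rcases eq_or_ne ((j : ℕ)) ((i : ℕ)) with hji | hji
        · have hj : j = i := Fin.ext hji
          subst hj
          rw [if_pos hji, if_pos rfl]
          have : ∀ h : (j : ℕ) + 1 < n,
              (if j = (⟨(j : ℕ) + 1, h⟩ : Fin n) then (1 : ℂ) else 0) = 0 := by
            intro h
            rw [if_neg]
            intro hc
            have := congrArg Fin.val hc
            simp at this
          by_cases h : (j : ℕ) + 1 < n
          · rw [dif_pos h, this h, add_zero]
          · rw [dif_neg h, add_zero]
        · rw [if_neg hji, if_neg (fun hc => hji (congrArg Fin.val hc))]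
          by_cases hj2 : (j : ℕ) = (i : ℕ) + 1
          · have hlt : (i : ℕ) + 1 < n := hj2 ▸ j.isLt
            rw [if_pos hj2, dif_pos hlt, if_pos (Fin.ext hj2), zero_add]
          · rw [if_neg hj2]
            by_cases h : (i : ℕ) + 1 < n
            · rw [dif_pos h, if_neg (fun hc => hj2 (congrArg Fin.val hc)), zero_add]
            · rw [dif_neg h, zero_add]
      have hrow : T.mulVec ((T ^ m).mulVec v) i =
          lam * ((T ^ m).mulVec v i) +
            (if h : (i : ℕ) + 1 < n then (T ^ m).mulVec v ⟨(i : ℕ) + 1, h⟩ else 0) := by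
        show ∑ j : Fin n, T i j * (T ^ m).mulVec v j = _
        calc ∑ j : Fin n, T i j * (T ^ m).mulVec v j
            = ∑ j : Fin n, ((if j = i then lam * (T ^ m).mulVec v j else 0) +
                (if h : (i : ℕ) + 1 < n then
                  (if j = ⟨(i : ℕ) + 1, h⟩ then (T ^ m).mulVec v j else 0) else 0)) := by
              refine Finset.sum_congr rfl fun j _ => ?_
              rw [hTij j]
              by_cases h : (i : ℕ) + 1 < n
              · rw [dif_pos h, dif_pos h]
                split_ifs <;> ring
              · rw [dif_neg h, dif_neg h]
                split_ifs <;> ring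
          _ = _ := by
              rw [Finset.sum_add_distrib]
              congr 1
              · rw [Finset.sum_ite_eq' Finset.univ i fun j => lam * (T ^ m).mulVec v j]
                simp
              · by_cases h : (i : ℕ) + 1 < n
                · simp only [dif_pos h]
                  rw [Finset.sum_ite_eq' Finset.univ (⟨(i : ℕ) + 1, h⟩ : Fin n)
                    fun j => (T ^ m).mulVec v j]
                  simp
                · simp only [dif_neg h]
                  simp
      have hdite : (if h : (i : ℕ) + 1 < n then (T ^ m).mulVec v ⟨(i : ℕ) + 1, h⟩ else 0)
          = ∑ r ∈ Finset.range n, (m.choose r : ℂ) * lam ^ (m - r) * V ((i : ℕ) + 1 + r) := by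
        by_cases h : (i : ℕ) + 1 < n
        · rw [dif_pos h, ih ⟨(i : ℕ) + 1, h⟩]
        · rw [dif_neg h]
          symm
          refine Finset.sum_eq_zero fun r _ => ?_
          rw [hVn _ (by omega), mul_zero]
      rw [hTs, hrow, ih i, hdite]
      exact jordan_gstep n m (i : ℕ) lam V hVn
  -- expansion of u
  have hu' : ∀ (m : ℕ) (i : Fin n), u m i
      = ∑ r ∈ Finset.range n,
          ((m.choose (k : ℕ) : ℂ))⁻¹ * ((m.choose r : ℂ) * lam ^ (m - r) * V ((i : ℕ) + r)) := by
    intro m i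
    rw [hu m]
    simp only [Pi.smul_apply, smul_eq_mul, key m i, Finset.mul_sum]
  -- norm of a term
  have hnormterm : ∀ (m r t : ℕ),
      ‖((m.choose (k : ℕ) : ℂ))⁻¹ * ((m.choose r : ℂ) * lam ^ (m - r) * V t)‖
        = (m.choose r : ℝ) / (m.choose (k : ℕ) : ℝ) * ‖V t‖ := by
    intro m r t
    rw [norm_mul, norm_mul, norm_mul, norm_inv, norm_pow, hlam, one_pow, mul_one,
      Complex.norm_natCast, Complex.norm_natCast, div_eq_mul_inv]
    ring
  -- a generic term tends to zero
  have hterm0 : ∀ (r t : ℕ), (r < (k : ℕ) ∨ (k : ℕ) < t) →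
      Tendsto (fun m : ℕ => ((m.choose (k : ℕ) : ℂ))⁻¹ *
        ((m.choose r : ℂ) * lam ^ (m - r) * V t)) atTop (nhds 0) := by
    intro r t hrt
    rcases hrt with hr | ht
    · rw [tendsto_zero_iff_norm_tendsto_zero]
      simp only [hnormterm]
      simpa using (choose_ratio_tendsto_zero hr).mul_const ‖V t‖
    · have hz : V t = 0 := hVgt t ht
      simp only [hz, mul_zero]
      exact tendsto_const_nhds
  have hval0 : (((⟨0, hn⟩ : Fin n)) : ℕ) = 0 := rfl
  -- the deviation of the zeroth coordinate
  have hd : Tendsto (fun m : ℕ => u m ⟨0, hn⟩ - lam ^ (m - (k : ℕ)) * v k) atTop (nhds 0) := by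
    have hkmem : (k : ℕ) ∈ Finset.range n := Finset.mem_range.mpr k.isLt
    have heq : ∀ᶠ m : ℕ in atTop, (∑ r ∈ (Finset.range n).erase (k : ℕ),
          ((m.choose (k : ℕ) : ℂ))⁻¹ * ((m.choose r : ℂ) * lam ^ (m - r) * V r))
        = u m ⟨0, hn⟩ - lam ^ (m - (k : ℕ)) * v k := by
      filter_upwards [eventually_ge_atTop (k : ℕ)] with m hm
      have hC : ((m.choose (k : ℕ) : ℂ)) ≠ 0 := by
        exact_mod_cast Nat.cast_ne_zero.mpr (Nat.choose_pos hm).ne'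
      have hsplit : ((m.choose (k : ℕ) : ℂ))⁻¹ *
            ((m.choose (k : ℕ) : ℂ) * lam ^ (m - (k : ℕ)) * V (k : ℕ)) +
            ∑ r ∈ (Finset.range n).erase (k : ℕ),
              ((m.choose (k : ℕ) : ℂ))⁻¹ * ((m.choose r : ℂ) * lam ^ (m - r) * V r)
          = ∑ r ∈ Finset.range n,
              ((m.choose (k : ℕ) : ℂ))⁻¹ * ((m.choose r : ℂ) * lam ^ (m - r) * V r) :=
        Finset.add_sum_erase (Finset.range n)
          (fun r => ((m.choose (k : ℕ) : ℂ))⁻¹ * ((m.choose r : ℂ) * lam ^ (m - r) * V r)) hkmem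
      have hu0 : u m ⟨0, hn⟩ = ∑ r ∈ Finset.range n,
          ((m.choose (k : ℕ) : ℂ))⁻¹ * ((m.choose r : ℂ) * lam ^ (m - r) * V r) := by
        rw [hu' m ⟨0, hn⟩]
        simp only [hval0, zero_add]
      have hkterm : ((m.choose (k : ℕ) : ℂ))⁻¹ *
          ((m.choose (k : ℕ) : ℂ) * lam ^ (m - (k : ℕ)) * V (k : ℕ))
          = lam ^ (m - (k : ℕ)) * v k := by
        rw [hVk]
        field_simp
      rw [hu0, ← hsplit, hkterm]
      ring
    have hsum : Tendsto (fun m : ℕ => ∑ r ∈ (Finset.range n).erase (k : ℕ),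
        ((m.choose (k : ℕ) : ℂ))⁻¹ * ((m.choose r : ℂ) * lam ^ (m - r) * V r)) atTop (nhds 0) := by
      have := tendsto_finset_sum ((Finset.range n).erase (k : ℕ))
        (fun r hr => hterm0 r r (by
          rcases Finset.mem_erase.mp hr with ⟨hne, _⟩
          omega))
      simpa using this
    exact hsum.congr' heq
  have hnormlam : ∀ m : ℕ, ‖lam ^ (m - (k : ℕ)) * v k‖ = ‖v k‖ := by
    intro m
    rw [norm_mul, norm_pow, hlam, one_pow, one_mul]
  have hlow : ∀ᶠ m : ℕ in atTop, ‖v k‖ / 2 ≤ ‖u m ⟨0, hn⟩‖ := by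
    have h1 : ∀ᶠ m : ℕ in atTop,
        ‖u m ⟨0, hn⟩ - lam ^ (m - (k : ℕ)) * v k‖ < ‖v k‖ / 2 := by
      have hnorm := hd.norm
      simp only [norm_zero] at hnorm
      exact hnorm.eventually_lt_const (by positivity)
    filter_upwards [h1] with m hm
    have h2 : ‖lam ^ (m - (k : ℕ)) * v k‖ - ‖u m ⟨0, hn⟩‖
        ≤ ‖u m ⟨0, hn⟩ - lam ^ (m - (k : ℕ)) * v k‖ := by
      rw [norm_sub_rev]
      exact norm_sub_norm_le _ _
    rw [hnormlam m] at h2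
    linarith
  -- all other coordinates tend to zero
  have hzero : ∀ i : Fin n, (i : ℕ) ≠ 0 → Tendsto (fun m : ℕ => u m i) atTop (nhds 0) := by
    intro i hi
    have hsum : Tendsto (fun m : ℕ => ∑ r ∈ Finset.range n,
        ((m.choose (k : ℕ) : ℂ))⁻¹ * ((m.choose r : ℂ) * lam ^ (m - r) * V ((i : ℕ) + r)))
        atTop (nhds 0) := by
      have := tendsto_finset_sum (Finset.range n)
        (fun r _ => hterm0 r ((i : ℕ) + r) (by
          rcases lt_or_ge r (k : ℕ) with h | h
          · exact Or.inl h
          · exact Or.inr (by omega)))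
      simpa using this
    exact hsum.congr fun m => (hu' m i).symm
  refine ⟨⟨‖v k‖ / 2, by positivity, hlow⟩, ?_, ?_⟩
  · -- relative convergence of other coordinates
    intro i hi
    have hvi : (i : ℕ) ≠ 0 := fun h => hi (Fin.ext h)
    have h1 : Tendsto (fun m : ℕ => ‖u m i‖) atTop (nhds 0) := by
      have := (hzero i hvi).norm
      simpa using this
    have h2 : Tendsto (fun m : ℕ => ‖u m i‖ / (‖v k‖ / 2)) atTop (nhds 0) := by
      simpa using h1.div_const (‖v k‖ / 2)
    refine tendsto_of_tendsto_of_tendsto_of_le_of_le' tendsto_const_nhds h2 ?_ ?_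
    · filter_upwards with m
      positivity
    · filter_upwards [hlow] with m hm
      gcongr
  · -- projective convergence
    have e1ne : (Pi.single (⟨0, hn⟩ : Fin n) (1 : ℂ) : Fin n → ℂ) ≠ 0 := by
      intro h
      have h1 := congrFun h ⟨0, hn⟩
      simp at h1
    set w : ℕ → Fin n → ℂ := fun m => (lam ^ (m - (k : ℕ)) * v k)⁻¹ • u m with hwdef
    have hcne : ∀ m : ℕ, lam ^ (m - (k : ℕ)) * v k ≠ 0 :=
      fun m => mul_ne_zero (pow_ne_zero _ hlamne) hk
    have hw0 : Tendsto w atTop (nhds (Pi.single (⟨0, hn⟩ : Fin n) (1 : ℂ))) := by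
      rw [tendsto_pi_nhds]
      intro i
      by_cases hi : i = ⟨0, hn⟩
      · subst hi
        rw [Pi.single_eq_same]
        have hrepr : ∀ m : ℕ, w m ⟨0, hn⟩ = 1 + (lam ^ (m - (k : ℕ)) * v k)⁻¹ *
            (u m ⟨0, hn⟩ - lam ^ (m - (k : ℕ)) * v k) := by
          intro m
          show (lam ^ (m - (k : ℕ)) * v k)⁻¹ * u m ⟨0, hn⟩ = _
          field_simp
          ring
        have h2 : Tendsto (fun m : ℕ => (lam ^ (m - (k : ℕ)) * v k)⁻¹ *
            (u m ⟨0, hn⟩ - lam ^ (m - (k : ℕ)) * v k)) atTop (nhds 0) := by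
          rw [tendsto_zero_iff_norm_tendsto_zero]
          have heqn : ∀ m : ℕ, ‖(lam ^ (m - (k : ℕ)) * v k)⁻¹ *
              (u m ⟨0, hn⟩ - lam ^ (m - (k : ℕ)) * v k)‖
              = ‖v k‖⁻¹ * ‖u m ⟨0, hn⟩ - lam ^ (m - (k : ℕ)) * v k‖ := by
            intro m
            rw [norm_mul, norm_inv, hnormlam]
          simp only [heqn]
          have := (hd.norm).const_mul (‖v k‖⁻¹)
          simpa using this
        have h3 := h2.const_add (1 : ℂ)
        simp only [add_zero] at h3
        exact h3.congr fun m => (hrepr m).symm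
      · rw [Pi.single_eq_of_ne hi]
        have hvi : (i : ℕ) ≠ 0 := fun h => hi (Fin.ext h)
        rw [tendsto_zero_iff_norm_tendsto_zero]
        have heqn : ∀ m : ℕ, ‖w m i‖ = ‖v k‖⁻¹ * ‖u m i‖ := by
          intro m
          show ‖(lam ^ (m - (k : ℕ)) * v k)⁻¹ * u m i‖ = _
          rw [norm_mul, norm_inv, hnormlam]
        simp only [heqn]
        have := ((hzero i hvi).norm).const_mul (‖v k‖⁻¹)
        simpa using this
    have hco : Tendsto (fun m : ℕ => w m ⟨0, hn⟩) atTop (nhds 1) := by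
      have := tendsto_pi_nhds.mp hw0 ⟨0, hn⟩
      simpa using this
    have hwne : ∀ᶠ m : ℕ in atTop, w m ≠ 0 := by
      filter_upwards [hco.eventually_ne (one_ne_zero)] with m hm
      intro h0
      exact hm (by rw [h0]; simp)
    set W : ℕ → {x : Fin n → ℂ // x ≠ 0} := fun m =>
      if h : w m ≠ 0 then ⟨w m, h⟩ else ⟨Pi.single (⟨0, hn⟩ : Fin n) (1 : ℂ), e1ne⟩ with hWdef
    have hWtend : Tendsto W atTop
        (nhds (⟨Pi.single (⟨0, hn⟩ : Fin n) (1 : ℂ), e1ne⟩ : {x : Fin n → ℂ // x ≠ 0})) := by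
      rw [tendsto_subtype_rng]
      refine hw0.congr' ?_
      filter_upwards [hwne] with m hm
      simp [hWdef, hm]
    have hcont : Continuous
        (Projectivization.mk' ℂ : {x : Fin n → ℂ // x ≠ 0} → ℙ ℂ (Fin n → ℂ)) :=
      continuous_coinduced_rng
    have hq : Tendsto (fun m : ℕ => Projectivization.mk' ℂ (W m)) atTop
        (nhds (Projectivization.mk' ℂ (⟨Pi.single (⟨0, hn⟩ : Fin n) (1 : ℂ), e1ne⟩ :
          {x : Fin n → ℂ // x ≠ 0}))) :=
      (hcont.tendsto _).comp hWtend
    refine Tendsto.congr' ?_ hq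
    filter_upwards [hwne, eventually_ge_atTop (k : ℕ)] with m hm hmk
    have hC : ((m.choose (k : ℕ) : ℂ)) ≠ 0 := by
      exact_mod_cast Nat.cast_ne_zero.mpr (Nat.choose_pos hmk).ne'
    have hWm : Projectivization.mk' ℂ (W m) = Projectivization.mk ℂ (w m) hm := by
      rw [hWdef]
      simp only [dif_pos hm]
      rfl
    rw [hWm]
    symm
    rw [Projectivization.mk_eq_mk_iff']
    refine ⟨(lam ^ (m - (k : ℕ)) * v k) * ((m.choose (k : ℕ) : ℂ)), ?_⟩
    have hwm : w m = (lam ^ (m - (k : ℕ)) * v k)⁻¹ • u m := rfl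
    funext j
    simp only [hwm, hu m, Pi.smul_apply, smul_eq_mul]
    field_simp
end
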